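/- arXiv:2205.04117 — 13 statements merged into one kernel-verified Lean document; each statement's English description precedes it below -/
import Mathlib

section
/- For all real numbers a > 0 and b ≥ 0, the integral ∫₀^∞ t^{-3/2} · exp(−a/t − b·t) dt (Lebesgue integral over the interval (0,∞)) converges and equals √(π/a) · exp(−2·√(a·b)). -/
open MeasureTheory Real Set

lemma glasser (c : ℝ) (hc : 0 ≤ c) :
    IntegrableOn (fun u : ℝ => Real.exp (-u^2 - c^2/u^2)) (Ioi 0) volume ∧
    ∫ u in Ioi (0:ℝ), Real.exp (-u^2 - c^2/u^2)
      = Real.sqrt π / 2 * Real.exp (-2*c) := by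
  have hmeas : AEStronglyMeasurable (fun u : ℝ => Real.exp (-u^2 - c^2/u^2))
      (volume.restrict (Ioi 0)) := by
    apply Measurable.aestronglyMeasurable; fun_prop
  have hint : IntegrableOn (fun u : ℝ => Real.exp (-u^2 - c^2/u^2)) (Ioi 0) volume := by
    refine Integrable.mono' ((integrable_exp_neg_mul_sq one_pos).restrict (s := Ioi 0)) hmeas ?_
    filter_upwards with x
    rw [Real.norm_eq_abs, abs_of_nonneg (Real.exp_nonneg _)]
    apply Real.exp_le_exp.mpr
    have : 0 ≤ c^2/x^2 := by positivity
    nlinarith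
  refine ⟨hint, ?_⟩
  rcases eq_or_lt_of_le hc with rfl | hc'
  · simp only [ne_eq, OfNat.ofNat_ne_zero, not_false_eq_true, zero_pow, zero_div, sub_zero,
      mul_zero, neg_zero, Real.exp_zero, mul_one]
    have := integral_gaussian_Ioi 1
    simp only [neg_mul, one_mul, div_one] at this
    rw [← this]
  · set G : ℝ → ℝ := fun x => Real.exp (-(x - c/x)^2) with hG
    have hc0 : c ≠ 0 := hc'.ne'
    have hexp : ∀ x : ℝ, x ≠ 0 →
        Real.exp (2*c) * Real.exp (-x^2 - c^2/x^2) = G x := by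
      intro x hx0
      rw [hG, ← Real.exp_add]
      congr 1
      field_simp
      ring
    have hderiv : ∀ x ∈ Ioi (0:ℝ), HasDerivWithinAt (fun x : ℝ => x - c/x)
        (1 + c/x^2) (Ioi 0) x := by
      intro x hx
      have hx0 : x ≠ 0 := (mem_Ioi.mp hx).ne'
      have : HasDerivAt (fun x : ℝ => x - c/x) (1 - c * (-(x^2)⁻¹)) x := by
        simpa [div_eq_mul_inv, Pi.sub_def] using
          (hasDerivAt_id x).sub (((hasDerivAt_inv hx0).const_mul c))
      rw [show (1:ℝ) + c/x^2 = 1 - c * (-(x^2)⁻¹) by ring]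
      exact this.hasDerivWithinAt
    have hinj : InjOn (fun x : ℝ => x - c/x) (Ioi 0) := by
      apply StrictMonoOn.injOn
      intro x hx y hy hxy
      have hx' : (0:ℝ) < x := hx
      have hy' : (0:ℝ) < y := hy
      have : c/y < c/x := div_lt_div_of_pos_left hc' hx' hxy
      dsimp only
      linarith
    have himg : (fun x : ℝ => x - c/x) '' (Ioi 0) = univ := by
      apply eq_univ_of_forall
      intro y
      have hs : Real.sqrt (y^2+4*c) ^ 2 = y^2 + 4*c := Real.sq_sqrt (by positivity)
      have h1 : |y| < Real.sqrt (y^2 + 4*c) := by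
        rw [← Real.sqrt_sq_eq_abs]
        exact Real.sqrt_lt_sqrt (sq_nonneg y) (by linarith)
      have hw : (0:ℝ) < (y + Real.sqrt (y^2 + 4*c))/2 := by
        have := neg_abs_le y; nlinarith [abs_nonneg y]
      refine ⟨(y + Real.sqrt (y^2 + 4*c))/2, mem_Ioi.mpr hw, ?_⟩
      have key : ((y + Real.sqrt (y^2 + 4*c))/2 - y) * ((y + Real.sqrt (y^2 + 4*c))/2) = c := by
        linear_combination hs / 4
      have hdiv : (y + Real.sqrt (y^2 + 4*c))/2 - y = c / ((y + Real.sqrt (y^2 + 4*c))/2) :=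
        (eq_div_iff hw.ne').mpr key
      dsimp only
      linarith
    have key1 : ∫ x in Ioi (0:ℝ), (1 + c/x^2) * G x = Real.sqrt π := by
      have h := integral_image_eq_integral_abs_deriv_smul measurableSet_Ioi hderiv hinj
        (fun s => Real.exp (-s^2))
      rw [himg, Measure.restrict_univ] at h
      have hg : ∫ s : ℝ, Real.exp (-s^2) = Real.sqrt π := by
        have := integral_gaussian 1
        simpa using this
      rw [hg] at h
      refine Eq.trans ?_ h.symm
      refine setIntegral_congr_fun measurableSet_Ioi (fun x hx => ?_)
      have hx0 : (0:ℝ) < x := hx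
      rw [smul_eq_mul, abs_of_pos (by positivity)]
    have int1 : IntegrableOn (fun x => (1 + c/x^2) * G x) (Ioi 0) volume := by
      have h := (integrableOn_image_iff_integrableOn_abs_deriv_smul measurableSet_Ioi hderiv hinj
        (fun s => Real.exp (-s^2))).mp
      rw [himg] at h
      have hh : IntegrableOn (fun s : ℝ => Real.exp (-s^2)) univ volume := by
        rw [integrableOn_univ]
        simpa using integrable_exp_neg_mul_sq one_pos
      refine IntegrableOn.congr_fun (h hh) (fun x hx => ?_) measurableSet_Ioi
      have hx0 : (0:ℝ) < x := hx
      rw [smul_eq_mul, abs_of_pos (by positivity)]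
    have intG : IntegrableOn G (Ioi 0) volume := by
      exact IntegrableOn.congr_fun (hint.const_mul (Real.exp (2*c)))
        (fun x hx => hexp x (mem_Ioi.mp hx).ne') measurableSet_Ioi
    have intCG : IntegrableOn (fun x => c/x^2 * G x) (Ioi 0) volume := by
      refine IntegrableOn.congr_fun (int1.sub intG) (fun x _ => ?_) measurableSet_Ioi
      simp only [Pi.sub_apply]; ring
    -- key2 : ∫ c/x² G = ∫ G
    have key2 : ∫ x in Ioi (0:ℝ), c/x^2 * G x = ∫ x in Ioi (0:ℝ), G x := by
      have A := integral_comp_rpow_Ioi (fun y => G (c * y)) (p := -1) (by norm_num)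
      have B := integral_comp_mul_left_Ioi G 0 hc'
      rw [mul_zero] at B
      have A' : ∫ x in Ioi (0:ℝ), (|(-1:ℝ)| * x ^ ((-1:ℝ)-1)) • G (c * x ^ (-1:ℝ))
          = ∫ x in Ioi (0:ℝ), c⁻¹ * (c/x^2 * G x) := by
        refine setIntegral_congr_fun measurableSet_Ioi (fun x hx => ?_)
        have hx0 : (0:ℝ) < x := hx
        have h1 : c * x ^ (-1:ℝ) = c / x := by rw [rpow_neg_one]; ring
        have h2 : G (c / x) = G x := by
          have hcx : c / (c / x) = x := by field_simp
          have harg : (c/x - c/(c/x))^2 = (x - c/x)^2 := by rw [hcx]; ring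
          rw [hG]
          dsimp only
          rw [harg]
        rw [smul_eq_mul, h1, h2, abs_neg, abs_one]
        rw [show ((-1:ℝ)-1) = -2 by norm_num, show (-2:ℝ) = -(2:ℕ) by norm_num,
          rpow_neg hx0.le, rpow_natCast]
        field_simp
      beta_reduce at A
      rw [A', B, MeasureTheory.integral_const_mul, smul_eq_mul] at A
      exact mul_left_cancel₀ (inv_ne_zero hc0) A
    -- split
    have split : ∫ x in Ioi (0:ℝ), (1 + c/x^2) * G x
        = (∫ x in Ioi (0:ℝ), G x) + ∫ x in Ioi (0:ℝ), c/x^2 * G x := by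
      rw [← integral_add intG intCG]
      refine setIntegral_congr_fun measurableSet_Ioi (fun x _ => ?_)
      ring
    have hGval : ∫ x in Ioi (0:ℝ), G x = Real.sqrt π / 2 := by
      rw [split, key2] at key1
      linarith
    -- conclude
    have : ∫ u in Ioi (0:ℝ), Real.exp (-u^2 - c^2/u^2)
        = ∫ u in Ioi (0:ℝ), Real.exp (-2*c) * G u := by
      refine setIntegral_congr_fun measurableSet_Ioi (fun x hx => ?_)
      have hx0 : x ≠ 0 := (mem_Ioi.mp hx).ne'
      rw [← hexp x hx0, ← mul_assoc, ← Real.exp_add]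
      norm_num
    rw [this, MeasureTheory.integral_const_mul, hGval]
    ring

theorem stmt_0 (a b : ℝ) (ha : 0 < a) (hb : 0 ≤ b) :
    IntegrableOn (fun t : ℝ => t ^ (-(3:ℝ)/2) * Real.exp (-a / t - b * t)) (Ioi 0) volume ∧
    ∫ t in Ioi (0:ℝ), t ^ (-(3:ℝ)/2) * Real.exp (-a / t - b * t) =
      Real.sqrt (π / a) * Real.exp (-2 * Real.sqrt (a * b)) := by
  set c : ℝ := Real.sqrt (a * b) with hcdef
  have hc : 0 ≤ c := Real.sqrt_nonneg _
  have hc2 : c ^ 2 = a * b := Real.sq_sqrt (mul_nonneg ha.le hb)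
  have hsa : (0:ℝ) < Real.sqrt a := Real.sqrt_pos.mpr ha
  have hsa2 : Real.sqrt a ^ 2 = a := Real.sq_sqrt ha.le
  set g : ℝ → ℝ := fun t => t ^ (-(3:ℝ)/2) * Real.exp (-a / t - b * t) with hgdef
  set h : ℝ → ℝ := fun s => s ^ (-(1:ℝ)/2) * Real.exp (-a * s - b / s) with hhdef
  set φ : ℝ → ℝ := fun u => 2 * Real.exp (-a * u^2 - b / u^2) with hφdef
  set ψ : ℝ → ℝ := fun x => 2 * Real.exp (-x^2 - c^2 / x^2) with hψdef
  obtain ⟨intψ0, valψ0⟩ := glasser c hc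
  have intψ : IntegrableOn ψ (Ioi 0) volume := intψ0.const_mul 2
  -- E3 : ψ (√a * x) = φ x for x > 0
  have E3 : ∀ x ∈ Ioi (0:ℝ), ψ (Real.sqrt a * x) = φ x := by
    intro x hx
    have hx0 : x ≠ 0 := (mem_Ioi.mp hx).ne'
    rw [hψdef, hφdef]
    dsimp only
    congr 1
    rw [mul_pow, hsa2, hc2]
    field_simp
  -- E2 : substitution s = x^2 turns h into φ
  have E2 : ∀ x ∈ Ioi (0:ℝ), (|(2:ℝ)| * x ^ ((2:ℝ)-1)) • h (x ^ (2:ℝ)) = φ x := by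
    intro x hx
    have hx0 : (0:ℝ) < x := hx
    rw [hhdef, hφdef]
    dsimp only
    rw [smul_eq_mul, Real.rpow_two, show ((2:ℝ)-1) = 1 by norm_num, Real.rpow_one,
      abs_of_pos (by norm_num : (0:ℝ) < 2)]
    have hxsq : ((x:ℝ)^2) ^ (-(1:ℝ)/2) = x⁻¹ := by
      rw [show ((x:ℝ)^2) = x ^ ((2:ℝ)) from (Real.rpow_two x).symm,
        ← Real.rpow_mul hx0.le]
      norm_num [Real.rpow_neg_one]
    rw [hxsq]
    field_simp
  -- E1 : substitution t = x⁻¹ turns g into h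
  have E1 : ∀ x ∈ Ioi (0:ℝ), (|(-1:ℝ)| * x ^ ((-1:ℝ)-1)) • g (x ^ (-1:ℝ)) = h x := by
    intro x hx
    have hx0 : (0:ℝ) < x := hx
    rw [hgdef, hhdef]
    dsimp only
    rw [smul_eq_mul, abs_neg, abs_one, one_mul, Real.rpow_neg_one]
    have h1 : (x⁻¹) ^ (-(3:ℝ)/2) = x ^ ((3:ℝ)/2) := by
      rw [← Real.rpow_neg_one x, ← Real.rpow_mul hx0.le]
      norm_num
    have h2 : x ^ ((-1:ℝ)-1) * x ^ ((3:ℝ)/2) = x ^ (-(1:ℝ)/2) := by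
      rw [← Real.rpow_add hx0]
      norm_num
    have h3 : -a / x⁻¹ - b * x⁻¹ = -a * x - b / x := by
      field_simp
    rw [h1, ← mul_assoc, h2, h3]
  -- integrability chain
  have intφ : IntegrableOn φ (Ioi 0) volume := by
    have := (integrableOn_Ioi_comp_mul_left_iff ψ 0 hsa).mpr
    rw [mul_zero] at this
    exact IntegrableOn.congr_fun (this intψ) E3 measurableSet_Ioi
  have inth : IntegrableOn h (Ioi 0) volume := by
    refine (integrableOn_Ioi_comp_rpow_iff h (p := 2) (by norm_num)).mp ?_
    exact IntegrableOn.congr_fun intφ (fun x hx => (E2 x hx).symm) measurableSet_Ioi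
  have intg : IntegrableOn g (Ioi 0) volume := by
    refine (integrableOn_Ioi_comp_rpow_iff g (p := -1) (by norm_num)).mp ?_
    exact IntegrableOn.congr_fun inth (fun x hx => (E1 x hx).symm) measurableSet_Ioi
  refine ⟨intg, ?_⟩
  -- value chain
  have V1 : ∫ t in Ioi (0:ℝ), g t = ∫ x in Ioi (0:ℝ), h x := by
    rw [← integral_comp_rpow_Ioi g (p := -1) (by norm_num)]
    exact setIntegral_congr_fun measurableSet_Ioi (fun x hx => E1 x hx)
  have V2 : ∫ s in Ioi (0:ℝ), h s = ∫ x in Ioi (0:ℝ), φ x := by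
    rw [← integral_comp_rpow_Ioi h (p := 2) (by norm_num)]
    exact setIntegral_congr_fun measurableSet_Ioi (fun x hx => E2 x hx)
  have V3 : ∫ u in Ioi (0:ℝ), φ u = (Real.sqrt a)⁻¹ * ∫ x in Ioi (0:ℝ), ψ x := by
    have := integral_comp_mul_left_Ioi ψ 0 hsa
    rw [mul_zero, smul_eq_mul] at this
    rw [← this]
    exact (setIntegral_congr_fun measurableSet_Ioi E3).symm
  have V4 : ∫ x in Ioi (0:ℝ), ψ x = Real.sqrt π * Real.exp (-2*c) := by
    rw [hψdef]
    rw [MeasureTheory.integral_const_mul, valψ0]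
    ring
  rw [V1, V2, V3, V4, hcdef]
  rw [Real.sqrt_div pi_pos.le]
  ring
end

section
/- The function s ↦ Γ(s − 1/2) · (Γ(s))⁻¹ from ℂ to ℂ is differentiable at s = 0 with derivative equal to −2·√π. -/
open Real

lemma aux_inv_Gamma (s : ℂ) : (Complex.Gamma s)⁻¹ = s * (Complex.Gamma (s + 1))⁻¹ := by
  by_cases hs : s = 0
  · simp [hs, Complex.Gamma_zero]
  · rw [Complex.Gamma_add_one s hs, mul_inv, ← mul_assoc, mul_inv_cancel₀ hs, one_mul]

lemma aux_Gamma_neg_half : Complex.Gamma (-(1/2)) = ((-2 * Real.sqrt π : ℝ) : ℂ) := by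
  have h : Complex.Gamma ((-(1/2) : ℂ) + 1) = (-(1/2) : ℂ) * Complex.Gamma (-(1/2)) :=
    Complex.Gamma_add_one _ (by norm_num)
  have h2 : ((-(1/2) : ℂ) + 1) = ((1/2 : ℝ) : ℂ) := by norm_num
  rw [h2, Complex.Gamma_ofReal, Real.Gamma_one_half_eq] at h
  push_cast
  linear_combination 2 * h

theorem stmt_1 :
    HasDerivAt (fun s : ℂ => Complex.Gamma (s - 1/2) * (Complex.Gamma s)⁻¹)
      ((-2 * Real.sqrt π : ℝ) : ℂ) 0 := by
  have hdiff : DifferentiableAt ℂ Complex.Gamma (-(1/2) : ℂ) := by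
    refine Complex.differentiableAt_Gamma _ fun m => ?_
    intro h
    have : ((1:ℝ)/2) = (m : ℝ) := by
      have := congrArg Complex.re h
      simp at this
      linarith [this]
    rcases m with _ | m
    · norm_num at this
    · push_cast at this; linarith
  have h1 : HasDerivAt (fun s : ℂ => Complex.Gamma (s - 1/2))
      (deriv Complex.Gamma (-(1/2) : ℂ)) 0 := by
    have hG := hdiff.hasDerivAt
    rw [show (-(1/2) : ℂ) = ((fun s : ℂ => s - 1/2) 0) by norm_num] at hG
    have := hG.comp 0 ((hasDerivAt_id (0:ℂ)).sub_const (1/2))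
    simpa [Function.comp_def] using this
  have hdiff1 : DifferentiableAt ℂ (fun s : ℂ => (Complex.Gamma (s + 1))⁻¹) 0 :=
    (Complex.differentiable_one_div_Gamma.comp (differentiable_id.add_const 1)) 0
  have h2 : HasDerivAt (fun s : ℂ => (Complex.Gamma s)⁻¹) 1 0 := by
    have hg : HasDerivAt (fun s : ℂ => s * (Complex.Gamma (s + 1))⁻¹)
        (1 * (Complex.Gamma (0 + 1))⁻¹ + 0 * deriv (fun s : ℂ => (Complex.Gamma (s + 1))⁻¹) 0)
        0 := (hasDerivAt_id (0:ℂ)).mul hdiff1.hasDerivAt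
    simp only [zero_add, Complex.Gamma_one, inv_one, one_mul, zero_mul, add_zero] at hg
    simpa only [← aux_inv_Gamma] using hg
  have := h1.mul h2
  simp only [Complex.Gamma_zero, inv_zero, mul_zero, zero_sub, mul_one, zero_add,
    aux_Gamma_neg_half] at this
  exact this
end

section
/- Let a > 0 and b ≥ 0 be real numbers, and let F₂ : ℕ → ℝ be a nonnegative function such that there exists C > 0 with F₂(j) ≤ C·(j+1)^b for all j ∈ ℕ. Then the function F₃ defined for t > 0 by F₃(t) = Σ_{j=0}^∞ F₂(j)·exp(−a·j²/t) satisfies F₃(t) = O(t^{(b+1)/2}) as t → ∞. -/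
open Real Filter

lemma aux_rpow_le_exp {p : ℝ} (hp : 0 ≤ p) {y : ℝ} (hy : 0 ≤ y) :
    y ^ p ≤ p ^ p * Real.exp y := by
  rcases eq_or_lt_of_le hp with rfl | hp
  · simpa using Real.one_le_exp hy
  · have h1 : y ≤ p * Real.exp (y / p) := by
      have := Real.add_one_le_exp (y / p)
      have hy' : y / p ≤ Real.exp (y / p) := by nlinarith [div_nonneg hy hp.le]
      calc y = p * (y / p) := by field_simp
        _ ≤ p * Real.exp (y / p) := by nlinarith
    calc y ^ p ≤ (p * Real.exp (y / p)) ^ p :=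
          Real.rpow_le_rpow hy h1 hp.le
      _ = p ^ p * (Real.exp (y / p)) ^ p :=
          Real.mul_rpow hp.le (Real.exp_pos _).le
      _ = p ^ p * Real.exp y := by
          rw [← Real.exp_mul, div_mul_cancel₀ _ hp.ne']

lemma aux_gauss_summable {c : ℝ} (hc : 0 < c) :
    Summable fun j : ℕ => Real.exp (-c * (j : ℝ) ^ 2) := by
  refine Summable.of_nonneg_of_le (fun j => (Real.exp_pos _).le) (fun j => ?_)
    (summable_geometric_of_lt_one (Real.exp_pos _).le
      (Real.exp_lt_one_iff.2 (by linarith : -c < 0)))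
  ·
    rw [← Real.exp_nat_mul]
    apply Real.exp_le_exp.2
    have hj : (j : ℝ) ≤ (j : ℝ) ^ 2 := by
      rcases Nat.eq_zero_or_pos j with h | h
      · simp [h]
      · have : (1 : ℝ) ≤ (j : ℝ) := by exact_mod_cast h
        nlinarith
    nlinarith

lemma aux_gauss_tsum_le {c : ℝ} (hc : 0 < c) :
    (∑' j : ℕ, Real.exp (-c * (j : ℝ) ^ 2)) ≤ 1 + Real.sqrt (π / c) / 2 := by
  rw [Summable.tsum_eq_zero_add (aux_gauss_summable hc)]
  refine add_le_add (by norm_num) ?_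
  simp only [Nat.cast_add, Nat.cast_one]
  apply Real.tsum_le_of_sum_range_le (fun n => (Real.exp_pos _).le)
  intro n
  have hanti : AntitoneOn (fun x : ℝ => Real.exp (-c * x ^ 2)) (Set.Icc 0 (0 + n)) := by
    intro x hx y hy hxy
    apply Real.exp_le_exp.2
    nlinarith [mul_nonneg (mul_nonneg hc.le (sub_nonneg.2 hxy)) (add_nonneg hx.1 hy.1)]
  have h := hanti.sum_le_integral
  have h2 : (∑ i ∈ Finset.range n, Real.exp (-c * ((i : ℝ) + 1) ^ 2))
      ≤ ∫ x in (0:ℝ)..(0 + n), Real.exp (-c * x ^ 2) := by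
    refine le_trans (le_of_eq ?_) h
    apply Finset.sum_congr rfl
    intro i _
    push_cast
    ring_nf
  refine h2.trans ?_
  rw [zero_add, intervalIntegral.integral_of_le (by positivity)]
  calc ∫ x in Set.Ioc (0:ℝ) n, Real.exp (-c * x ^ 2)
      ≤ ∫ x in Set.Ioi (0:ℝ), Real.exp (-c * x ^ 2) := by
        apply MeasureTheory.setIntegral_mono_set
          (integrable_exp_neg_mul_sq hc).integrableOn
        · filter_upwards with x using (Real.exp_pos _).le
        · exact HasSubset.Subset.eventuallyLE Set.Ioc_subset_Ioi_self
    _ = Real.sqrt (π / c) / 2 := integral_gaussian_Ioi c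

lemma aux_key {b c : ℝ} (hb : 0 ≤ b) (hc : 0 < c) (j : ℕ) :
    ((j : ℝ) + 1) ^ b * Real.exp (-c * (j : ℝ) ^ 2) ≤
      (2 ^ (b/2) * (4/c) ^ (b/2) * (b/2) ^ (b/2) * Real.exp (c/4)) *
        Real.exp (-(c/2) * (j : ℝ) ^ 2) := by
  set x := (j : ℝ) with hxdef
  have hx : 0 ≤ x := Nat.cast_nonneg j
  have h1 : (x + 1) ^ b = ((x + 1) ^ 2) ^ (b/2) := by
    rw [← Real.rpow_natCast (x + 1) 2, ← Real.rpow_mul (by positivity)]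
    congr 1
    push_cast
    ring
  have h2 : ((x + 1) ^ 2) ^ (b/2) ≤ (2 * (x ^ 2 + 1)) ^ (b/2) :=
    Real.rpow_le_rpow (by positivity) (by nlinarith [sq_nonneg (x - 1)]) (by positivity)
  have h3 : (2 * (x ^ 2 + 1)) ^ (b/2) = 2 ^ (b/2) * (x ^ 2 + 1) ^ (b/2) :=
    Real.mul_rpow (by norm_num) (by positivity)
  have h4 : (x ^ 2 + 1) ^ (b/2) ≤ (4/c) ^ (b/2) * ((b/2) ^ (b/2) *
      Real.exp (c/4 * (x ^ 2 + 1))) := by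
    have hy : (0:ℝ) ≤ c/4 * (x ^ 2 + 1) := by positivity
    have hle := aux_rpow_le_exp (p := b/2) (by positivity) hy
    have heq : x ^ 2 + 1 = (4/c) * (c/4 * (x ^ 2 + 1)) := by field_simp
    calc (x ^ 2 + 1) ^ (b/2) = ((4/c) * (c/4 * (x ^ 2 + 1))) ^ (b/2) := by rw [← heq]
      _ = (4/c) ^ (b/2) * (c/4 * (x ^ 2 + 1)) ^ (b/2) := Real.mul_rpow (by positivity) hy
      _ ≤ (4/c) ^ (b/2) * ((b/2) ^ (b/2) * Real.exp (c/4 * (x ^ 2 + 1))) := by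
          exact mul_le_mul_of_nonneg_left hle (by positivity)
  have hexp : Real.exp (c/4 * (x ^ 2 + 1)) * Real.exp (-c * x ^ 2)
      ≤ Real.exp (c/4) * Real.exp (-(c/2) * x ^ 2) := by
    rw [← Real.exp_add, ← Real.exp_add]
    apply Real.exp_le_exp.2
    nlinarith [sq_nonneg x, hc.le]
  calc (x + 1) ^ b * Real.exp (-c * x ^ 2)
      ≤ (2 ^ (b/2) * ((4/c) ^ (b/2) * ((b/2) ^ (b/2) *
          Real.exp (c/4 * (x ^ 2 + 1))))) * Real.exp (-c * x ^ 2) := by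
        apply mul_le_mul_of_nonneg_right _ (Real.exp_pos _).le
        rw [h1]
        refine h2.trans ?_
        rw [h3]
        exact mul_le_mul_of_nonneg_left h4 (by positivity)
    _ = (2 ^ (b/2) * (4/c) ^ (b/2) * (b/2) ^ (b/2)) *
          (Real.exp (c/4 * (x ^ 2 + 1)) * Real.exp (-c * x ^ 2)) := by ring
    _ ≤ (2 ^ (b/2) * (4/c) ^ (b/2) * (b/2) ^ (b/2)) *
          (Real.exp (c/4) * Real.exp (-(c/2) * x ^ 2)) :=
        mul_le_mul_of_nonneg_left hexp (by positivity)
    _ = (2 ^ (b/2) * (4/c) ^ (b/2) * (b/2) ^ (b/2) * Real.exp (c/4)) *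
          Real.exp (-(c/2) * x ^ 2) := by ring

theorem stmt_2 (a b : ℝ) (ha : 0 < a) (hb : 0 ≤ b) (F₂ : ℕ → ℝ)
    (hF₂ : ∀ j, 0 ≤ F₂ j)
    (hbound : ∃ C > 0, ∀ j : ℕ, F₂ j ≤ C * ((j : ℝ) + 1) ^ b) :
    (∀ t : ℝ, 0 < t → Summable fun j : ℕ => F₂ j * Real.exp (-a * (j : ℝ) ^ 2 / t)) ∧
    (fun t : ℝ => ∑' j : ℕ, F₂ j * Real.exp (-a * (j : ℝ) ^ 2 / t)) =O[atTop]
      fun t : ℝ => t ^ ((b + 1) / 2) := by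
  obtain ⟨C, hC, hCb⟩ := hbound
  have key : ∀ t : ℝ, 0 < t → ∀ j : ℕ,
      F₂ j * Real.exp (-a * (j : ℝ) ^ 2 / t) ≤
        (C * (2 ^ (b/2) * (4/(a/t)) ^ (b/2) * (b/2) ^ (b/2) * Real.exp ((a/t)/4))) *
          Real.exp (-((a/t)/2) * (j : ℝ) ^ 2) := by
    intro t ht j
    have hct : 0 < a / t := by positivity
    have h0 : -a * (j:ℝ) ^ 2 / t = -(a/t) * (j:ℝ) ^ 2 := by ring
    rw [h0]
    calc F₂ j * Real.exp (-(a/t) * (j:ℝ)^2)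
        ≤ (C * ((j:ℝ)+1) ^ b) * Real.exp (-(a/t) * (j:ℝ)^2) :=
          mul_le_mul_of_nonneg_right (hCb j) (Real.exp_pos _).le
      _ = C * (((j:ℝ)+1) ^ b * Real.exp (-(a/t) * (j:ℝ)^2)) := by ring
      _ ≤ C * ((2 ^ (b/2) * (4/(a/t)) ^ (b/2) * (b/2) ^ (b/2) * Real.exp ((a/t)/4)) *
            Real.exp (-((a/t)/2) * (j:ℝ)^2)) :=
          mul_le_mul_of_nonneg_left (aux_key hb hct j) hC.le
      _ = _ := by ring
  have hsum : ∀ t : ℝ, 0 < t →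
      Summable fun j : ℕ => F₂ j * Real.exp (-a * (j:ℝ)^2 / t) := by
    intro t ht
    have hct : 0 < a / t := by positivity
    exact Summable.of_nonneg_of_le (fun j => mul_nonneg (hF₂ j) (Real.exp_pos _).le)
      (key t ht) ((aux_gauss_summable (half_pos hct)).mul_left _)
  refine ⟨hsum, ?_⟩
  rw [Asymptotics.isBigO_iff]
  set q : ℝ := (b+1)/2 with hq
  refine ⟨C * (2 ^ (b/2) * 4 ^ (b/2) * (b/2) ^ (b/2) * Real.exp (a/4)) *
    (1 + Real.sqrt (2*π)) * a ^ (-q), ?_⟩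
  filter_upwards [eventually_ge_atTop (max 1 a)] with t ht
  have ht1 : (1:ℝ) ≤ t := le_trans (le_max_left _ _) ht
  have hta : a ≤ t := le_trans (le_max_right _ _) ht
  have ht0 : 0 < t := lt_of_lt_of_le one_pos ht1
  have hc : 0 < a / t := by positivity
  have hc1 : a / t ≤ 1 := by rw [div_le_one ht0]; exact hta
  have hca : a / t ≤ a := div_le_self ha.le ht1
  have hnn : 0 ≤ ∑' j:ℕ, F₂ j * Real.exp (-a * (j:ℝ)^2 / t) :=
    tsum_nonneg (fun j => mul_nonneg (hF₂ j) (Real.exp_pos _).le)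
  rw [Real.norm_eq_abs, Real.norm_eq_abs, abs_of_nonneg hnn,
    abs_of_nonneg (Real.rpow_nonneg ht0.le _)]
  have step1 : (∑' j:ℕ, F₂ j * Real.exp (-a*(j:ℝ)^2/t)) ≤
      (C * (2 ^ (b/2) * (4/(a/t)) ^ (b/2) * (b/2) ^ (b/2) * Real.exp ((a/t)/4))) *
        ∑' j:ℕ, Real.exp (-((a/t)/2) * (j:ℝ)^2) := by
    rw [← tsum_mul_left]
    exact Summable.tsum_le_tsum (key t ht0) (hsum t ht0)
      (Summable.mul_left _ (aux_gauss_summable (half_pos hc)))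
  have step2 : (∑' j:ℕ, Real.exp (-((a/t)/2) * (j:ℝ)^2)) ≤
      1 + Real.sqrt (π/((a/t)/2))/2 := aux_gauss_tsum_le (half_pos hc)
  have h4c : (4/(a/t)) ^ (b/2) = 4 ^ (b/2) * (a/t) ^ (-(b/2)) := by
    rw [Real.div_rpow (by norm_num) hc.le, Real.rpow_neg hc.le, div_eq_mul_inv]
  have hsqrt : Real.sqrt (π/((a/t)/2)) = Real.sqrt (2*π) * (a/t) ^ (-(1/2):ℝ) := by
    have hπ : π/((a/t)/2) = (2*π)/(a/t) := by field_simp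
    rw [hπ, Real.sqrt_div (by positivity) _, Real.rpow_neg hc.le, ← Real.sqrt_eq_rpow,
      div_eq_mul_inv]
  have hone : (1:ℝ) ≤ (a/t) ^ (-(1/2):ℝ) := by
    rw [Real.rpow_neg hc.le, ← Real.sqrt_eq_rpow]
    rw [one_le_inv_iff₀]
    exact ⟨Real.sqrt_pos.2 hc, Real.sqrt_le_one.2 hc1⟩
  have hgauss2 : 1 + Real.sqrt (π/((a/t)/2))/2 ≤
      (1 + Real.sqrt (2*π)) * (a/t) ^ (-(1/2):ℝ) := by
    rw [hsqrt]
    nlinarith [hone, Real.sqrt_nonneg (2*π),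
      mul_nonneg (Real.sqrt_nonneg (2*π)) (Real.rpow_nonneg hc.le (-(1/2):ℝ))]
  have hpowsplit : (a/t) ^ (-(b/2)) * (a/t) ^ (-(1/2):ℝ) = (a/t) ^ (-q) := by
    rw [← Real.rpow_add hc]
    congr 1
    rw [hq]; ring
  have hfinal_pow : (a/t) ^ (-q) = a ^ (-q) * t ^ q := by
    rw [Real.div_rpow ha.le ht0.le, Real.rpow_neg ht0.le, div_eq_mul_inv, inv_inv]
  calc (∑' j:ℕ, F₂ j * Real.exp (-a*(j:ℝ)^2/t))
      ≤ (C * (2 ^ (b/2) * (4/(a/t)) ^ (b/2) * (b/2) ^ (b/2) * Real.exp ((a/t)/4))) *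
          (1 + Real.sqrt (π/((a/t)/2))/2) :=
        step1.trans (mul_le_mul_of_nonneg_left step2 (by positivity))
    _ ≤ (C * (2 ^ (b/2) * (4 ^ (b/2) * (a/t) ^ (-(b/2))) * (b/2) ^ (b/2) *
          Real.exp (a/4))) * ((1 + Real.sqrt (2*π)) * (a/t) ^ (-(1/2):ℝ)) := by
        apply mul_le_mul _ hgauss2 (by positivity) (by positivity)
        rw [← h4c]
        gcongr
    _ = (C * (2 ^ (b/2) * 4 ^ (b/2) * (b/2) ^ (b/2) * Real.exp (a/4)) *
          (1 + Real.sqrt (2*π))) * ((a/t) ^ (-(b/2)) * (a/t) ^ (-(1/2):ℝ)) := by ring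
    _ = (C * (2 ^ (b/2) * 4 ^ (b/2) * (b/2) ^ (b/2) * Real.exp (a/4)) *
          (1 + Real.sqrt (2*π))) * (a ^ (-q) * t ^ q) := by rw [hpowsplit, hfinal_pow]
    _ = (C * (2 ^ (b/2) * 4 ^ (b/2) * (b/2) ^ (b/2) * Real.exp (a/4)) *
          (1 + Real.sqrt (2*π)) * a ^ (-q)) * t ^ q := by ring
end

section
/- Let a > 0 and b ≥ 0 be real numbers, and let F₂ : ℕ → ℝ be a nonnegative function such that there exists C > 0 with F₂(j) ≤ C·exp(b·j) for all j ∈ ℕ. Then the function F₃ defined for t > 0 by F₃(t) = Σ_{j=0}^∞ F₂(j)·exp(−a·j²/t) satisfies F₃(t) = O(t^{1/2} · exp(b²·t/(4a))) as t → ∞. -/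
open Real Filter

private lemma aux_summable {α : ℝ} (hα : 0 < α) (β : ℝ) :
    Summable fun j : ℕ => Real.exp (β * j - α * (j : ℝ) ^ 2) := by
  have hs : Summable fun j : ℕ => Real.exp (-1 : ℝ) ^ j :=
    summable_geometric_of_lt_one (Real.exp_pos _).le
      (Real.exp_lt_one_iff.2 (by norm_num))
  refine Summable.of_norm_bounded_eventually_nat hs ?_
  filter_upwards [eventually_ge_atTop ⌈(β + 1) / α⌉₊] with j hj
  have hj' : (β + 1) / α ≤ (j : ℝ) := (Nat.le_ceil _).trans (by exact_mod_cast hj)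
  have h1 : β + 1 ≤ (j : ℝ) * α := (div_le_iff₀ hα).1 hj'
  have hj0 : (0 : ℝ) ≤ j := Nat.cast_nonneg _
  rw [← Real.exp_nat_mul, Real.norm_eq_abs, Real.abs_exp, Real.exp_le_exp]
  nlinarith [mul_le_mul_of_nonneg_left h1 hj0]

private lemma aux_summable_sq {α : ℝ} (hα : 0 < α) :
    Summable fun k : ℕ => Real.exp (-α * (k : ℝ) ^ 2) :=
  (aux_summable hα 0).congr fun j => by norm_num

private lemma aux_gauss_sum {α : ℝ} (hα : 0 < α) :
    ∑' k : ℕ, Real.exp (-α * (k : ℝ) ^ 2) ≤ 1 + Real.sqrt (π / α) / 2 := by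
  rw [Summable.tsum_eq_zero_add (aux_summable_sq hα)]
  have h0 : Real.exp (-α * ((0 : ℕ) : ℝ) ^ 2) = 1 := by norm_num
  rw [h0]
  gcongr
  refine Real.tsum_le_of_sum_range_le (fun n => by positivity) (fun n => ?_)
  have hanti : AntitoneOn (fun x : ℝ => Real.exp (-α * x ^ 2))
      (Set.Icc (0 : ℝ) (0 + n)) := by
    intro x hx y hy hxy
    refine Real.exp_le_exp.2 ?_
    nlinarith [mul_le_mul hxy hxy hx.1 (hx.1.trans hxy), hα]
  have h1 := hanti.sum_le_integral
  calc ∑ i ∈ Finset.range n, Real.exp (-α * (((i + 1 : ℕ) : ℝ)) ^ 2)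
      = ∑ i ∈ Finset.range n,
          (fun x : ℝ => Real.exp (-α * x ^ 2)) ((0 : ℝ) + ((i + 1 : ℕ) : ℝ)) := by
        refine Finset.sum_congr rfl fun i _ => ?_
        norm_num
    _ ≤ ∫ x in (0 : ℝ)..(0 + n), Real.exp (-α * x ^ 2) := h1
    _ ≤ ∫ x in Set.Ioi (0 : ℝ), Real.exp (-α * x ^ 2) := by
        rw [zero_add, intervalIntegral.integral_of_le (by positivity)]
        refine MeasureTheory.setIntegral_mono_set
          ((integrable_exp_neg_mul_sq hα).integrableOn) ?_ ?_
        · exact Filter.Eventually.of_forall fun x => (Real.exp_pos _).le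
        · exact HasSubset.Subset.eventuallyLE Set.Ioc_subset_Ioi_self
    _ = Real.sqrt (π / α) / 2 := integral_gaussian_Ioi α

private lemma aux_shift_summable {α : ℝ} (hα : 0 < α) (m : ℝ) :
    Summable fun j : ℕ => Real.exp (-α * ((j : ℝ) - m) ^ 2) := by
  refine ((aux_summable hα (2 * α * m)).mul_left
    (Real.exp (-(α * m ^ 2)))).congr fun j => ?_
  rw [← Real.exp_add]
  exact congrArg Real.exp (by ring)

set_option maxHeartbeats 1000000 in
private lemma aux_shift_bound {α m : ℝ} (hα : 0 < α) (hm0 : 0 ≤ m) :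
    ∑' j : ℕ, Real.exp (-α * ((j : ℝ) - m) ^ 2)
      ≤ 1 + 2 * ∑' k : ℕ, Real.exp (-α * (k : ℝ) ^ 2) := by
  have hgsum := aux_shift_summable hα m
  have hSsum := aux_summable_sq hα
  have hSnn : 0 ≤ ∑' k : ℕ, Real.exp (-α * (k : ℝ) ^ 2) :=
    tsum_nonneg fun k => (Real.exp_pos _).le
  have hmM : m ≤ (⌈m⌉₊ : ℝ) := Nat.le_ceil m
  have hMm : ((⌈m⌉₊ : ℕ) : ℝ) ≤ m + 1 := le_of_lt (Nat.ceil_lt_add_one hm0)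
  rw [← Summable.sum_add_tsum_nat_add (f := fun j : ℕ => Real.exp (-α * ((j : ℝ) - m) ^ 2))
    (⌈m⌉₊ + 1) hgsum]
  have htail : ∑' k : ℕ, Real.exp (-α * (((k + (⌈m⌉₊ + 1) : ℕ) : ℝ) - m) ^ 2)
      ≤ ∑' k : ℕ, Real.exp (-α * (k : ℝ) ^ 2) := by
    refine Summable.tsum_le_tsum (fun k => ?_) ((summable_nat_add_iff (⌈m⌉₊ + 1)).2 hgsum) hSsum
    refine Real.exp_le_exp.2 ?_
    have h1 : (k : ℝ) ≤ ((k + (⌈m⌉₊ + 1) : ℕ) : ℝ) - m := by push_cast; nlinarith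
    have h2 : (0 : ℝ) ≤ (k : ℝ) := Nat.cast_nonneg _
    nlinarith [mul_le_mul h1 h1 h2 (h2.trans h1), hα]
  have hhead : ∑ j ∈ Finset.range (⌈m⌉₊ + 1), Real.exp (-α * ((j : ℝ) - m) ^ 2)
      ≤ 1 + ∑' k : ℕ, Real.exp (-α * (k : ℝ) ^ 2) := by
    rw [← Finset.sum_range_reflect]
    have hterm : ∀ i ∈ Finset.range (⌈m⌉₊ + 1),
        Real.exp (-α * (((⌈m⌉₊ + 1 - 1 - i : ℕ) : ℝ) - m) ^ 2)
          ≤ Real.exp (-α * ((i - 1 : ℕ) : ℝ) ^ 2) := by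
      intro i hi
      rw [Finset.mem_range] at hi
      have hiM : i ≤ ⌈m⌉₊ := Nat.lt_succ_iff.1 hi
      refine Real.exp_le_exp.2 ?_
      rcases Nat.eq_zero_or_pos i with hi0 | hipos
      · subst hi0
        have h9 : ((0 - 1 : ℕ) : ℝ) = 0 := by norm_num
        rw [h9]
        nlinarith [sq_nonneg (((⌈m⌉₊ + 1 - 1 - 0 : ℕ) : ℝ) - m), hα]
      · obtain ⟨i', rfl⟩ := Nat.exists_eq_add_of_lt hipos
        rw [zero_add] at *
        have hc1 : ((i' + 1 - 1 : ℕ) : ℝ) = (i' : ℝ) := by norm_num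
        have hc2 : ((⌈m⌉₊ + 1 - 1 - (i' + 1) : ℕ) : ℝ) = ((⌈m⌉₊ : ℕ) : ℝ) - (i' + 1) := by
          have h : ⌈m⌉₊ + 1 - 1 - (i' + 1) = ⌈m⌉₊ - (i' + 1) := by omega
          rw [h, Nat.cast_sub hiM]
          push_cast; ring
        rw [hc1, hc2]
        have h3 : (i' : ℝ) ≤ m - (((⌈m⌉₊ : ℕ) : ℝ) - (i' + 1)) := by nlinarith
        have h4 : (0 : ℝ) ≤ (i' : ℝ) := Nat.cast_nonneg _
        nlinarith [mul_le_mul h3 h3 h4 (h4.trans h3), hα]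
    refine le_trans (Finset.sum_le_sum hterm) ?_
    rw [Finset.sum_range_succ']
    have h5 : Real.exp (-α * ((0 - 1 : ℕ) : ℝ) ^ 2) = 1 := by norm_num
    rw [h5]
    have h6 : ∀ i : ℕ, Real.exp (-α * ((i + 1 - 1 : ℕ) : ℝ) ^ 2)
        = Real.exp (-α * (i : ℝ) ^ 2) := by intro i; norm_num
    rw [Finset.sum_congr rfl fun i _ => h6 i, add_comm]
    gcongr
    exact Summable.sum_le_tsum _ (fun k _ => (Real.exp_pos _).le) hSsum
  linarith

set_option maxHeartbeats 1000000 in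
theorem stmt_3 (a b : ℝ) (ha : 0 < a) (hb : 0 ≤ b) (F₂ : ℕ → ℝ)
    (hF₂ : ∀ j, 0 ≤ F₂ j)
    (hbound : ∃ C > 0, ∀ j : ℕ, F₂ j ≤ C * Real.exp (b * (j : ℝ))) :
    (∀ t : ℝ, 0 < t → Summable fun j : ℕ => F₂ j * Real.exp (-a * (j : ℝ) ^ 2 / t)) ∧
    (fun t : ℝ => ∑' j : ℕ, F₂ j * Real.exp (-a * (j : ℝ) ^ 2 / t)) =O[atTop]
      fun t : ℝ => t ^ ((1 : ℝ) / 2) * Real.exp (b ^ 2 * t / (4 * a)) := by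
  obtain ⟨C, hC, hCb⟩ := hbound
  have key : ∀ t : ℝ, 0 < t → ∀ j : ℕ,
      F₂ j * Real.exp (-a * (j : ℝ) ^ 2 / t)
        ≤ C * Real.exp (b * j - (a / t) * (j : ℝ) ^ 2) := by
    intro t ht j
    have h1 : Real.exp (b * j - (a / t) * (j : ℝ) ^ 2)
        = Real.exp (b * j) * Real.exp (-a * (j : ℝ) ^ 2 / t) := by
      rw [← Real.exp_add]; congr 1; field_simp; ring
    rw [h1, ← mul_assoc]
    exact mul_le_mul_of_nonneg_right (hCb j) (Real.exp_pos _).le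
  have hsum : ∀ t : ℝ, 0 < t →
      Summable fun j : ℕ => F₂ j * Real.exp (-a * (j : ℝ) ^ 2 / t) := by
    intro t ht
    refine Summable.of_nonneg_of_le
      (fun j => mul_nonneg (hF₂ j) (Real.exp_pos _).le) (key t ht)
      (((aux_summable (div_pos ha ht) b).mul_left C))
  refine ⟨hsum, ?_⟩
  rw [Asymptotics.isBigO_iff]
  refine ⟨C * (3 + Real.sqrt (π / a)), ?_⟩
  filter_upwards [eventually_ge_atTop (1 : ℝ)] with t ht
  have ht0 : (0 : ℝ) < t := lt_of_lt_of_le one_pos ht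
  have hα : 0 < a / t := div_pos ha ht0
  have hm0 : 0 ≤ b * t / (2 * a) := by positivity
  have hSnn : 0 ≤ ∑' k : ℕ, Real.exp (-(a / t) * (k : ℝ) ^ 2) :=
    tsum_nonneg fun k => (Real.exp_pos _).le
  have hgsum := aux_shift_summable hα (b * t / (2 * a))
  -- term bound in terms of the shifted gaussian
  have key2 : ∀ j : ℕ, F₂ j * Real.exp (-a * (j : ℝ) ^ 2 / t)
      ≤ C * Real.exp (b ^ 2 * t / (4 * a))
          * Real.exp (-(a / t) * ((j : ℝ) - b * t / (2 * a)) ^ 2) := by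
    intro j
    refine (key t ht0 j).trans (le_of_eq ?_)
    rw [mul_assoc]
    congr 1
    rw [← Real.exp_add]
    congr 1
    field_simp
    ring
  -- bound on S
  have hSbound : ∑' k : ℕ, Real.exp (-(a / t) * (k : ℝ) ^ 2)
      ≤ 1 + Real.sqrt (π / a) / 2 * Real.sqrt t := by
    refine (aux_gauss_sum hα).trans ?_
    have h : π / (a / t) = π / a * t := by field_simp
    rw [h, Real.sqrt_mul (by positivity)]
    gcongr
    nlinarith [Real.sq_sqrt ht0.le, Real.sqrt_nonneg t, Real.sqrt_le_sqrt ht]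
  have hst : (1 : ℝ) ≤ Real.sqrt t := by
    rw [show (1:ℝ) = Real.sqrt 1 by simp]; exact Real.sqrt_le_sqrt ht
  have hfinal : ∑' j : ℕ, F₂ j * Real.exp (-a * (j : ℝ) ^ 2 / t)
      ≤ C * (3 + Real.sqrt (π / a)) * (Real.sqrt t * Real.exp (b ^ 2 * t / (4 * a))) := by
    have h7 : ∑' j : ℕ, F₂ j * Real.exp (-a * (j : ℝ) ^ 2 / t)
        ≤ C * Real.exp (b ^ 2 * t / (4 * a))
            * ∑' j : ℕ, Real.exp (-(a / t) * ((j : ℝ) - b * t / (2 * a)) ^ 2) := by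
      rw [← tsum_mul_left]
      exact Summable.tsum_le_tsum key2 (hsum t ht0) (hgsum.mul_left _)
    refine h7.trans ?_
    have h8 : ∑' j : ℕ, Real.exp (-(a / t) * ((j : ℝ) - b * t / (2 * a)) ^ 2)
        ≤ (3 + Real.sqrt (π / a)) * Real.sqrt t := by
      refine (aux_shift_bound hα hm0).trans ?_
      have hs0 : 0 ≤ Real.sqrt (π / a) := Real.sqrt_nonneg _
      nlinarith
    calc C * Real.exp (b ^ 2 * t / (4 * a))
          * ∑' j : ℕ, Real.exp (-(a / t) * ((j : ℝ) - b * t / (2 * a)) ^ 2)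
        ≤ C * Real.exp (b ^ 2 * t / (4 * a)) * ((3 + Real.sqrt (π / a)) * Real.sqrt t) :=
          mul_le_mul_of_nonneg_left h8 (by positivity)
      _ = C * (3 + Real.sqrt (π / a)) * (Real.sqrt t * Real.exp (b ^ 2 * t / (4 * a))) := by
          ring
  have hnorm1 : ‖∑' j : ℕ, F₂ j * Real.exp (-a * (j : ℝ) ^ 2 / t)‖
      = ∑' j : ℕ, F₂ j * Real.exp (-a * (j : ℝ) ^ 2 / t) := by
    rw [Real.norm_eq_abs, abs_of_nonneg]
    exact tsum_nonneg fun j => mul_nonneg (hF₂ j) (Real.exp_pos _).le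
  rw [hnorm1, Real.norm_eq_abs, abs_of_nonneg (by positivity),
    show t ^ ((1 : ℝ) / 2) = Real.sqrt t from (Real.sqrt_eq_rpow t).symm]
  exact hfinal
end

section
/- Let f : ℝ → ℝ be continuous on (0, 1], and suppose there is a constant C such that |f(t) · log(t) / t| ≤ C for all t ∈ (0, 1]. Then the function s ↦ (s / Γ(s)) · ∫₀¹ t^{s−1} f(t) dt (a real-variable function, defined for real s in a neighbourhood of 0; the integral is the Lebesgue integral over (0,1], which converges under the stated hypothesis for s > −1) is differentiable at s = 0 with derivative equal to 0. -/
open MeasureTheory Real Set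

theorem stmt_4 (f : ℝ → ℝ) (hf : ContinuousOn f (Ioc 0 1))
    (C : ℝ) (hC : ∀ t ∈ Ioc (0:ℝ) 1, |f t * Real.log t / t| ≤ C) :
    HasDerivAt (fun s : ℝ => s / Real.Gamma s * ∫ t in Ioc (0:ℝ) 1, t ^ (s - 1) * f t)
      0 0 := by
  have hC0 : 0 ≤ C := le_trans (abs_nonneg _) (hC 1 ⟨zero_lt_one, le_refl _⟩)
  -- bound of f on [e⁻¹, 1]
  have hsub : Icc (Real.exp (-1)) 1 ⊆ Ioc (0:ℝ) 1 := fun x hx =>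
    ⟨lt_of_lt_of_le (Real.exp_pos _) hx.1, hx.2⟩
  obtain ⟨M, hM⟩ := (isCompact_Icc (a := Real.exp (-1)) (b := 1)).exists_bound_of_continuousOn
    (hf.mono hsub)
  have hM0 : 0 ≤ M := le_trans (norm_nonneg _)
    (hM 1 ⟨(Real.exp_le_one_iff.mpr (by norm_num)), le_refl _⟩)
  set K : ℝ := C + M * Real.exp 1 with hK
  -- key pointwise bound
  have key : ∀ s : ℝ, |s| ≤ 1/2 → ∀ t ∈ Ioc (0:ℝ) 1,
      ‖t ^ (s - 1) * f t‖ ≤ K * t ^ (-(1/2) : ℝ) := by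
    intro s hs t ht
    have ht0 : (0:ℝ) < t := ht.1
    have hs1 : -(1/2 : ℝ) ≤ s := neg_le_of_abs_le hs
    have hs2 : s ≤ 1/2 := le_of_abs_le hs
    have hpow : (0:ℝ) < t ^ (s - 1) := Real.rpow_pos_of_pos ht0 _
    rcases le_or_gt t (Real.exp (-1)) with h | h
    · -- small t : |f t| ≤ C * t
      have hlog : Real.log t ≤ -1 := by
        calc Real.log t ≤ Real.log (Real.exp (-1)) :=
              Real.log_le_log (by positivity) h
          _ = -1 := Real.log_exp _
      have habslog : 1 ≤ |Real.log t| := by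
        rw [abs_of_nonpos (by linarith)]; linarith
      have hft : |f t| ≤ C * t := by
        have h1 := hC t ht
        have h2 : |f t| * |Real.log t| / t = |f t * Real.log t / t| := by
          rw [abs_div, abs_mul, abs_of_pos ht0]
        have h3 : |f t| / t ≤ |f t| * |Real.log t| / t := by
          gcongr
          nlinarith [abs_nonneg (f t)]
        have := le_trans h3 (h2 ▸ h1)
        rw [div_le_iff₀ ht0] at this
        linarith
      have : ‖t ^ (s - 1) * f t‖ ≤ t ^ (s - 1) * (C * t) := by
        rw [norm_mul, Real.norm_eq_abs, Real.norm_eq_abs, abs_of_pos hpow]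
        exact mul_le_mul_of_nonneg_left hft hpow.le
      refine le_trans this ?_
      have heq : t ^ (s - 1) * (C * t) = C * t ^ s := by
        rw [show t ^ s = t ^ (s - 1 + 1) by ring_nf, Real.rpow_add ht0,
          Real.rpow_one]
        ring
      rw [heq]
      have hts : t ^ s ≤ t ^ (-(1/2) : ℝ) :=
        Real.rpow_le_rpow_of_exponent_ge ht0 ht.2 hs1
      have h2 : C * t ^ s ≤ C * t ^ (-(1/2) : ℝ) := mul_le_mul_of_nonneg_left hts hC0
      have h3 : (0:ℝ) ≤ M * Real.exp 1 * t ^ (-(1/2) : ℝ) := by positivity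
      rw [hK]; nlinarith
    · -- large t : |f t| ≤ M
      have hft : |f t| ≤ M := hM t ⟨h.le, ht.2⟩
      have hts : t ^ (s - 1) ≤ t ^ (-(3/2) : ℝ) :=
        Real.rpow_le_rpow_of_exponent_ge ht0 ht.2 (by linarith)
      have h32 : t ^ (-(3/2) : ℝ) = t ^ (-(1/2) : ℝ) * t⁻¹ := by
        rw [show (-(3/2) : ℝ) = -(1/2) + (-1) by norm_num, Real.rpow_add ht0,
          Real.rpow_neg_one]
      have hinv : t⁻¹ ≤ Real.exp 1 := by
        rw [inv_le_comm₀ ht0 (Real.exp_pos 1)]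
        calc (Real.exp 1)⁻¹ = Real.exp (-1) := by rw [← Real.exp_neg]
          _ ≤ t := h.le
      have : ‖t ^ (s - 1) * f t‖ ≤ t ^ (-(3/2) : ℝ) * M := by
        rw [norm_mul, Real.norm_eq_abs, Real.norm_eq_abs, abs_of_pos hpow]
        exact mul_le_mul hts hft (abs_nonneg _) (Real.rpow_pos_of_pos ht0 _).le
      refine le_trans this ?_
      rw [h32, hK]
      have h1 : t ^ (-(1/2):ℝ) * t⁻¹ * M ≤ t ^ (-(1/2):ℝ) * Real.exp 1 * M := by
        have h0 := (Real.rpow_pos_of_pos ht0 (-(1/2):ℝ)).le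
        exact mul_le_mul_of_nonneg_right (mul_le_mul_of_nonneg_left hinv h0) hM0
      have h2 : (0:ℝ) ≤ C * t ^ (-(1/2) : ℝ) := by positivity
      nlinarith
  -- integrability of the bound
  have hint : IntegrableOn (fun t : ℝ => K * t ^ (-(1/2) : ℝ)) (Ioc 0 1) := by
    have h := (intervalIntegral.intervalIntegrable_rpow'
      (a := 0) (b := 1) (r := -(1/2)) (by norm_num))
    rw [intervalIntegrable_iff_integrableOn_Ioc_of_le zero_le_one] at h
    exact h.const_mul K
  set B : ℝ := ∫ t in Ioc (0:ℝ) 1, K * t ^ (-(1/2) : ℝ) with hB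
  -- uniform bound on the integral
  have hFbound : ∀ s : ℝ, |s| ≤ 1/2 →
      ‖∫ t in Ioc (0:ℝ) 1, t ^ (s - 1) * f t‖ ≤ B := by
    intro s hs
    refine norm_integral_le_of_norm_le hint ?_
    rw [ae_restrict_iff' measurableSet_Ioc]
    exact Filter.Eventually.of_forall (fun t ht => key s hs t ht)
  -- rewrite as slope tendsto
  rw [hasDerivAt_iff_tendsto_slope]
  have hg0 : (fun s : ℝ => s / Real.Gamma s * ∫ t in Ioc (0:ℝ) 1, t ^ (s - 1) * f t) 0
      = 0 := by simp [Real.Gamma_zero]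
  -- the auxiliary tendsto: s ↦ B * |s / Γ (s+1)| → 0
  have hΓcont : ContinuousAt Real.Gamma 1 := by
    apply (Real.differentiableAt_Gamma ?_).continuousAt
    intro m
    have hm : (0:ℝ) ≤ m := Nat.cast_nonneg m
    intro h; linarith
  have haux : Filter.Tendsto (fun s : ℝ => B * |s / Real.Gamma (s + 1)|)
      (nhdsWithin 0 {(0:ℝ)}ᶜ) (nhds 0) := by
    have h1 : Filter.Tendsto (fun s : ℝ => s / Real.Gamma (s + 1)) (nhds 0) (nhds 0) := by
      have h2 : ContinuousAt (fun s : ℝ => Real.Gamma (s + 1)) 0 := by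
        have hg : ContinuousAt Real.Gamma ((0:ℝ) + 1) := by rwa [zero_add]
        have hf1 : ContinuousAt (fun s : ℝ => s + 1) (0:ℝ) :=
          continuousAt_id.add continuousAt_const
        exact ContinuousAt.comp (f := fun s : ℝ => s + 1) (x := (0:ℝ)) hg hf1
      have h3 : Real.Gamma (0 + 1) ≠ 0 := by
        rw [zero_add, Real.Gamma_one]; norm_num
      have := (continuousAt_id.div h2 h3)
      have h4 := this.tendsto
      simpa [Real.Gamma_one, Pi.div_def] using h4
    have h5 : Filter.Tendsto (fun s : ℝ => B * |s / Real.Gamma (s + 1)|) (nhds 0) (nhds 0) := by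
      have := (h1.abs).const_mul B
      simpa using this
    exact h5.mono_left nhdsWithin_le_nhds
  refine squeeze_zero_norm' ?_ haux
  -- eventual bound on the slope
  have hev : ∀ᶠ s : ℝ in nhdsWithin 0 {(0:ℝ)}ᶜ, s ∈ Ioo (-(1/2):ℝ) (1/2) ∧ s ≠ 0 := by
    have h1 : Ioo (-(1/2):ℝ) (1/2) ∈ nhds (0:ℝ) := Ioo_mem_nhds (by norm_num) (by norm_num)
    filter_upwards [nhdsWithin_le_nhds h1, self_mem_nhdsWithin] with s hs hs'
    exact ⟨hs, hs'⟩
  filter_upwards [hev] with s hs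
  obtain ⟨⟨hsl, hsr⟩, hs0⟩ := hs
  have habs : |s| ≤ 1/2 := abs_le.mpr ⟨hsl.le, hsr.le⟩
  have hΓne : Real.Gamma s ≠ 0 := by
    apply Real.Gamma_ne_zero
    intro m
    rcases Nat.eq_zero_or_pos m with hm | hm
    · subst hm; simpa using hs0
    · intro h
      have : (1:ℝ) ≤ m := by exact_mod_cast hm
      rw [h] at hsl; push_cast at hsl; linarith
  have hΓadd : Real.Gamma (s + 1) = s * Real.Gamma s := Real.Gamma_add_one hs0
  set F : ℝ := ∫ t in Ioc (0:ℝ) 1, t ^ (s - 1) * f t with hF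
  have hslope : slope (fun s : ℝ =>
      s / Real.Gamma s * ∫ t in Ioc (0:ℝ) 1, t ^ (s - 1) * f t) 0 s
      = s / Real.Gamma (s + 1) * F := by
    have hz : (0:ℝ)/Real.Gamma 0 * (∫ t in Ioc (0:ℝ) 1, t ^ ((0:ℝ) - 1) * f t) = 0 := by
      simp [Real.Gamma_zero]
    rw [slope_def_field, hz, hΓadd]
    field_simp
    rw [hF]; ring
  rw [hslope]
  rw [norm_mul]
  calc ‖s / Real.Gamma (s + 1)‖ * ‖F‖ ≤ ‖s / Real.Gamma (s + 1)‖ * B := by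
        exact mul_le_mul_of_nonneg_left (hFbound s habs) (norm_nonneg _)
    _ = B * |s / Real.Gamma (s + 1)| := by rw [Real.norm_eq_abs]; ring
end

section
/- Let f : ℝ → ℂ be continuous on [1, ∞) and suppose f(t) = O(t^{−α}) as t → ∞ for some α > 0. Then the function s ↦ (Γ(s))⁻¹ · ∫₁^∞ t^{s−1} f(t) dt (a real-variable function, defined for real s < α; the integral converges absolutely for such s) is differentiable at s = 0, with derivative equal to ∫₁^∞ t^{−1} f(t) dt. -/
open MeasureTheory Real Set Filter Topology

lemma one_div_Gamma_hasDerivAt_zero :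
    HasDerivAt (fun z : ℂ => (Complex.Gamma z)⁻¹) 1 0 := by
  have key : ∀ z : ℂ, (Complex.Gamma z)⁻¹ = z * (Complex.Gamma (z + 1))⁻¹ := by
    intro z
    rcases eq_or_ne z 0 with rfl | hz
    · simp [Complex.Gamma_zero]
    · rw [Complex.Gamma_add_one z hz, mul_inv, ← mul_assoc, mul_inv_cancel₀ hz, one_mul]
  have hd : DifferentiableAt ℂ (fun z : ℂ => (Complex.Gamma (z + 1))⁻¹) 0 :=
    (Complex.differentiable_one_div_Gamma.comp (differentiable_id.add_const 1)) 0
  have h1 : HasDerivAt (fun z : ℂ => z * (Complex.Gamma (z + 1))⁻¹)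
      (1 * (Complex.Gamma ((0:ℂ) + 1))⁻¹ + 0 * deriv (fun z : ℂ => (Complex.Gamma (z + 1))⁻¹) 0)
      0 := (hasDerivAt_id 0).mul hd.hasDerivAt
  have h2 : HasDerivAt (fun z : ℂ => z * (Complex.Gamma (z + 1))⁻¹) 1 0 := by
    simpa [Complex.Gamma_one] using h1
  exact h2.congr_of_eventuallyEq (Eventually.of_forall fun z => key z)

theorem stmt_5 (f : ℝ → ℂ) (hf : ContinuousOn f (Ici 1))
    (α : ℝ) (hα : 0 < α) (hO : f =O[atTop] fun t : ℝ => t ^ (-α)) :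
    (∀ s : ℝ, s < α →
      IntegrableOn (fun t : ℝ => ((t ^ (s - 1) : ℝ) : ℂ) * f t) (Ioi 1) volume) ∧
    HasDerivAt (fun s : ℝ =>
        ((Real.Gamma s : ℂ))⁻¹ * ∫ t in Ioi (1:ℝ), ((t ^ (s - 1) : ℝ) : ℂ) * f t)
      (∫ t in Ioi (1:ℝ), ((t : ℂ))⁻¹ * f t) 0 := by
  set F : ℝ → ℂ := (Ioi (1:ℝ)).indicator f with hFdef
  -- locally integrable
  have hF_loc : LocallyIntegrableOn F (Ioi 0) := by
    rw [locallyIntegrableOn_iff isOpen_Ioi.isLocallyClosed]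
    intro K hK hKc
    obtain ⟨R, hR⟩ := hKc.isBounded.bddAbove
    have h1 : IntegrableOn f (Ioi 1 ∩ K) := by
      refine ((hf.mono (Icc_subset_Ici_self (a := R) (b := 1))).integrableOn_Icc).mono_set ?_
      exact fun x hx => ⟨le_of_lt hx.1, hR hx.2⟩
    refine (integrable_indicator_iff measurableSet_Ioi).2 ?_
    rw [IntegrableOn, Measure.restrict_restrict measurableSet_Ioi]
    exact h1
  -- big-O at top
  have hF_top : F =O[atTop] fun t : ℝ => t ^ (-α) := by
    refine Filter.EventuallyEq.trans_isBigO ?_ hO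
    filter_upwards [eventually_gt_atTop (1:ℝ)] with t ht
    exact indicator_of_mem ht f
  -- big-O at 0 (F eventually zero)
  have hF_bot : ∀ b : ℝ, F =O[𝓝[>] (0:ℝ)] fun t : ℝ => t ^ (-b) := by
    intro b
    have hz : F =ᶠ[𝓝[>] (0:ℝ)] fun _ => (0:ℂ) := by
      filter_upwards [eventually_nhdsWithin_of_eventually_nhds
        (eventually_lt_nhds (by norm_num : (0:ℝ) < 1))] with t ht
      exact indicator_of_notMem (by simpa using ht.le) f
    exact hz.trans_isBigO (Asymptotics.isBigO_zero _ _)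
  -- mellin F equals the integral over Ioi 1
  have hmel : ∀ s : ℝ, mellin F (s : ℂ) =
      ∫ t in Ioi (1:ℝ), ((t ^ (s - 1) : ℝ) : ℂ) * f t := by
    intro s
    have hptw : ∀ t : ℝ, (t : ℂ) ^ ((s : ℂ) - 1) • F t =
        (Ioi (1:ℝ)).indicator (fun t => ((t ^ (s - 1) : ℝ) : ℂ) * f t) t := by
      intro t
      by_cases ht : t ∈ Ioi (1:ℝ)
      · have h0 : (0:ℝ) ≤ t := le_of_lt (lt_trans zero_lt_one ht)
        simp only [hFdef, indicator_of_mem ht, smul_eq_mul,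
          Complex.ofReal_cpow h0, Complex.ofReal_sub, Complex.ofReal_one]
      · simp only [hFdef, indicator_of_notMem ht, smul_zero]
    rw [mellin]
    simp_rw [hptw]
    rw [setIntegral_indicator measurableSet_Ioi]
    congr 1
    rw [Set.Ioi_inter_Ioi, max_eq_right zero_le_one]
  constructor
  · -- integrability
    intro s hs
    have hconv : MellinConvergent F (s : ℂ) :=
      mellinConvergent_of_isBigO_rpow (a := α) (b := s - 1) hF_loc hF_top
        (by simpa using hs) (hF_bot _) (by simp)
    have h2 := hconv.mono_set (Ioi_subset_Ioi zero_le_one)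
    refine (IntegrableOn.congr_fun h2 ?_ measurableSet_Ioi)
    intro t ht
    have h0 : (0:ℝ) ≤ t := le_of_lt (lt_trans zero_lt_one ht)
    simp only [hFdef, indicator_of_mem ht, smul_eq_mul,
      Complex.ofReal_cpow h0, Complex.ofReal_sub, Complex.ofReal_one]
  · -- differentiability
    have hmd : DifferentiableAt ℂ (mellin F) 0 :=
      mellin_differentiableAt_of_isBigO_rpow (a := α) (b := -1) hF_loc hF_top
        (by simpa using hα) (hF_bot _) (by norm_num)
    have hM : HasDerivAt (mellin F) (deriv (mellin F) 0) 0 := hmd.hasDerivAt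
    have hprod := one_div_Gamma_hasDerivAt_zero.mul hM
    have hprod' : HasDerivAt (fun z : ℂ => (Complex.Gamma z)⁻¹ * mellin F z)
        (mellin F 0) 0 := by
      simpa [Complex.Gamma_zero, Pi.mul_def] using hprod
    have hre : HasDerivAt (fun s : ℝ => (Complex.Gamma (s : ℂ))⁻¹ * mellin F (s : ℂ))
        (mellin F 0) 0 := by
      have := HasDerivAt.comp_ofReal (z := (0:ℝ)) (by simpa using hprod')
      simpa using this
    have hfun : HasDerivAt (fun s : ℝ =>
        ((Real.Gamma s : ℂ))⁻¹ * ∫ t in Ioi (1:ℝ), ((t ^ (s - 1) : ℝ) : ℂ) * f t)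
        (mellin F 0) 0 := by
      refine hre.congr_of_eventuallyEq (Eventually.of_forall fun s => ?_)
      simp only [hmel s, Complex.Gamma_ofReal]
    have hval : mellin F 0 = ∫ t in Ioi (1:ℝ), ((t : ℂ))⁻¹ * f t := by
      have h0 : mellin F ((0:ℝ) : ℂ) = ∫ t in Ioi (1:ℝ), ((t ^ ((0:ℝ) - 1) : ℝ) : ℂ) * f t :=
        hmel 0
      rw [Complex.ofReal_zero] at h0
      rw [h0]
      refine setIntegral_congr_fun measurableSet_Ioi fun t ht => ?_
      have h0t : (0:ℝ) < t := lt_trans zero_lt_one ht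
      rw [zero_sub, Real.rpow_neg_one, Complex.ofReal_inv]
    exact hval ▸ hfun
end

section
/- Let r ∈ ℝ with r ∉ ℤ, let n ∈ ℕ with n + 1 > r, let a₀, …, a_n ∈ ℂ, and let h : (0, 1] → ℂ be continuous with h(t) − Σ_{j=0}^n a_j · t^{j−r} = O(t^{n+1−r}) as t → 0⁺. Define, for real s, G(s) := Σ_{j=0}^n a_j · (s + j − r)⁻¹ · (Γ(s))⁻¹ + (Γ(s))⁻¹ · ∫₀¹ t^{s−1} · (h(t) − Σ_{j=0}^n a_j t^{j−r}) dt. Then: (i) for every real s > max(r, 0), the integral ∫₀¹ t^{s−1} h(t) dt converges and G(s) = (Γ(s))⁻¹ · ∫₀¹ t^{s−1} h(t) dt; and (ii) G is differentiable at s = 0 (in particular, the remainder integral in G(s) converges for all real s > r − n − 1). -/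
open MeasureTheory Real Set Filter

theorem stmt_6 (r : ℝ) (hr : ∀ m : ℤ, r ≠ (m : ℝ)) (n : ℕ) (hn : r < (n : ℝ) + 1)
    (a : ℕ → ℂ) (h : ℝ → ℂ) (hcont : ContinuousOn h (Ioc 0 1))
    (hO : (fun t : ℝ => h t - ∑ j ∈ Finset.range (n + 1),
          a j * ((t ^ ((j : ℝ) - r) : ℝ) : ℂ))
        =O[nhdsWithin 0 (Ioi 0)] fun t : ℝ => (t ^ ((n : ℝ) + 1 - r) : ℝ))
    (G : ℝ → ℂ)
    (hG : ∀ s : ℝ, G s =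
        (∑ j ∈ Finset.range (n + 1),
          a j * (((s + (j : ℝ) - r)⁻¹ : ℝ) : ℂ) * ((Real.Gamma s : ℂ))⁻¹)
        + ((Real.Gamma s : ℂ))⁻¹ * ∫ t in Ioc (0:ℝ) 1, ((t ^ (s - 1) : ℝ) : ℂ) *
            (h t - ∑ j ∈ Finset.range (n + 1), a j * ((t ^ ((j : ℝ) - r) : ℝ) : ℂ))) :
    (∀ s : ℝ, max r 0 < s →
      IntegrableOn (fun t : ℝ => ((t ^ (s - 1) : ℝ) : ℂ) * h t) (Ioc 0 1) volume ∧
      G s = ((Real.Gamma s : ℂ))⁻¹ * ∫ t in Ioc (0:ℝ) 1, ((t ^ (s - 1) : ℝ) : ℂ) * h t) ∧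
    (∀ s : ℝ, r - (n : ℝ) - 1 < s →
      IntegrableOn (fun t : ℝ => ((t ^ (s - 1) : ℝ) : ℂ) *
          (h t - ∑ j ∈ Finset.range (n + 1), a j * ((t ^ ((j : ℝ) - r) : ℝ) : ℂ)))
        (Ioc 0 1) volume) ∧
    DifferentiableAt ℝ G 0 := by
  set R : ℝ → ℂ := fun t => h t - ∑ j ∈ Finset.range (n + 1),
      a j * ((t ^ ((j : ℝ) - r) : ℝ) : ℂ) with hRdef
  have hexp : (0:ℝ) < (n:ℝ) + 1 - r := by linarith
  -- continuity of R on Ioc 0 1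
  have hRcont : ContinuousOn R (Ioc 0 1) := by
    apply hcont.sub
    apply continuousOn_finset_sum
    intro j _
    exact continuousOn_const.mul
      (Complex.continuous_ofReal.comp_continuousOn
        (ContinuousOn.rpow_const continuousOn_id (fun t ht => Or.inl ht.1.ne')))
  have hRmeas : AEStronglyMeasurable R (volume.restrict (Ioc (0:ℝ) 1)) :=
    hRcont.aestronglyMeasurable measurableSet_Ioc
  -- R is bounded near 0, hence integrable on Ioc 0 1
  have hRint : IntegrableOn R (Ioc (0:ℝ) 1) := by
    obtain ⟨C, hC0, hC⟩ := hO.exists_pos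
    rw [Asymptotics.isBigOWith_iff, eventually_nhdsWithin_iff, Metric.eventually_nhds_iff] at hC
    obtain ⟨ε, hε, hεC⟩ := hC
    set δ := min (ε / 2) 1 with hδdef
    have hδ0 : 0 < δ := lt_min (by linarith) one_pos
    have hδ1 : δ ≤ 1 := min_le_right _ _
    have hsplit : Ioc (0:ℝ) 1 = Ioc 0 δ ∪ Ioc δ 1 := (Ioc_union_Ioc_eq_Ioc hδ0.le hδ1).symm
    rw [hsplit, integrableOn_union]
    constructor
    · refine ⟨hRmeas.mono_set (Ioc_subset_Ioc_right hδ1), ?_⟩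
      refine HasFiniteIntegral.restrict_of_bounded (C := C * 1) (by simp) ?_
      refine (ae_restrict_mem measurableSet_Ioc).mono fun t ht => ?_
      have ht0 : 0 < t := ht.1
      have hdist : dist t 0 < ε := by
        rw [Real.dist_eq, sub_zero, abs_of_pos ht0]
        have : t ≤ ε / 2 := ht.2.trans (min_le_left _ _)
        linarith
      have hb := hεC hdist ht0
      calc ‖R t‖ ≤ C * ‖(t ^ ((n:ℝ) + 1 - r) : ℝ)‖ := hb
        _ ≤ C * 1 := by
            gcongr
            rw [Real.norm_of_nonneg (rpow_nonneg ht0.le _)]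
            exact rpow_le_one ht0.le (ht.2.trans hδ1) hexp.le
    · refine ((hRcont.mono ?_).integrableOn_compact isCompact_Icc).mono_set Ioc_subset_Icc_self
      exact fun t ht => ⟨hδ0.trans_le ht.1, ht.2⟩
  -- the indicator extension
  set f : ℝ → ℂ := (Ioc (0:ℝ) 1).indicator R with hfdef
  have hfint : Integrable f := (integrable_indicator_iff measurableSet_Ioc).mpr hRint
  have hfloc : LocallyIntegrableOn f (Ioi 0) := hfint.locallyIntegrable.locallyIntegrableOn _
  have hftop : ∀ a : ℝ, f =O[atTop] fun t : ℝ => t ^ (-a) := by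
    intro b
    have h0 : f =ᶠ[atTop] (fun _ => 0) := by
      filter_upwards [eventually_gt_atTop 1] with t ht
      exact indicator_of_notMem (fun hmem => absurd hmem.2 (not_le.mpr ht)) R
    exact h0.trans_isBigO (Asymptotics.isBigO_zero _ _)
  have hfbot : f =O[nhdsWithin 0 (Ioi 0)] fun t : ℝ => t ^ (-(r - (n:ℝ) - 1)) := by
    have h1 : f =ᶠ[nhdsWithin 0 (Ioi 0)] R := by
      filter_upwards [Ioo_mem_nhdsGT_of_mem (by norm_num : (0:ℝ) ∈ Ico 0 1)] with t ht
      exact indicator_of_mem (show t ∈ Ioc (0:ℝ) 1 from ⟨ht.1, ht.2.le⟩) R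
    have : -(r - (n:ℝ) - 1) = (n:ℝ) + 1 - r := by ring
    rw [this]
    exact h1.trans_isBigO hO
  -- key integrability
  have key : ∀ s : ℝ, r - (n:ℝ) - 1 < s →
      IntegrableOn (fun t : ℝ => ((t ^ (s - 1) : ℝ) : ℂ) * R t) (Ioc 0 1) volume := by
    intro s hs
    have hconv : MellinConvergent f (s : ℂ) :=
      mellinConvergent_of_isBigO_rpow hfloc (hftop (s + 1))
        (by simp) hfbot (by simpa using hs)
    have := (hconv.mono_set Ioc_subset_Ioi_self : IntegrableOn _ (Ioc (0:ℝ) 1) _)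
    refine this.congr_fun (fun t ht => ?_) measurableSet_Ioc
    rw [hfdef]
    simp only [indicator_of_mem ht, smul_eq_mul]
    rw [Complex.ofReal_cpow ht.1.le]
    norm_cast
  -- mellin identity
  have hmellin : ∀ s : ℝ, mellin f (s : ℂ) =
      ∫ t in Ioc (0:ℝ) 1, ((t ^ (s - 1) : ℝ) : ℂ) * R t := by
    intro s
    rw [mellin]
    have : ∀ t : ℝ, (t : ℂ) ^ ((s:ℂ) - 1) • f t
        = (Ioc (0:ℝ) 1).indicator (fun t => (t : ℂ) ^ ((s:ℂ) - 1) • R t) t := by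
      intro t
      by_cases ht : t ∈ Ioc (0:ℝ) 1
      · simp [hfdef, indicator_of_mem ht]
      · simp [hfdef, indicator_of_notMem ht]
    simp_rw [this]
    rw [setIntegral_indicator measurableSet_Ioc, inter_eq_self_of_subset_right Ioc_subset_Ioi_self]
    refine setIntegral_congr_fun measurableSet_Ioc fun t ht => ?_
    rw [smul_eq_mul, Complex.ofReal_cpow ht.1.le]
    norm_cast
  -- G as a nice function
  have hGeq : G = fun s : ℝ =>
      (∑ j ∈ Finset.range (n + 1),
        a j * (((s + (j : ℝ) - r)⁻¹ : ℝ) : ℂ) * (Complex.Gamma (s:ℂ))⁻¹)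
      + (Complex.Gamma (s:ℂ))⁻¹ * mellin f (s : ℂ) := by
    funext s
    rw [hG s, hmellin s, Complex.Gamma_ofReal]
  constructor
  · -- part (i)
    intro s hs
    have hsr : r < s := (le_max_left _ _).trans_lt hs
    have hs0 : 0 < s := (le_max_right _ _).trans_lt hs
    have hkey := key s (by linarith)
    -- power terms
    have hpow : ∀ j : ℕ, j ∈ Finset.range (n + 1) →
        IntegrableOn (fun t : ℝ => ((t ^ (s - 1) : ℝ) : ℂ) *
          (a j * ((t ^ ((j : ℝ) - r) : ℝ) : ℂ))) (Ioc 0 1) volume := by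
      intro j _
      have hp : (-1:ℝ) < s + (j:ℝ) - r - 1 := by
        have : (0:ℝ) ≤ (j:ℝ) := Nat.cast_nonneg j
        linarith
      have h1 : IntegrableOn (fun t : ℝ => t ^ (s + (j:ℝ) - r - 1)) (Ioc 0 1) volume :=
        (intervalIntegrable_iff_integrableOn_Ioc_of_le zero_le_one).mp
          (intervalIntegral.intervalIntegrable_rpow' hp)
      have h2 : IntegrableOn (fun t : ℝ => a j * (((t:ℝ) ^ (s + (j:ℝ) - r - 1) : ℝ) : ℂ))
          (Ioc 0 1) volume := (h1.ofReal (𝕜 := ℂ)).const_mul (a j)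
      refine h2.congr_fun (fun t ht => ?_) measurableSet_Ioc
      dsimp only
      rw [show s + (j:ℝ) - r - 1 = (s - 1) + ((j:ℝ) - r) by ring, Real.rpow_add ht.1]
      push_cast
      ring
    have hintsum : IntegrableOn (fun t : ℝ => ∑ j ∈ Finset.range (n+1),
        ((t ^ (s - 1) : ℝ) : ℂ) * (a j * ((t ^ ((j : ℝ) - r) : ℝ) : ℂ))) (Ioc 0 1) volume :=
      integrable_finset_sum _ hpow
    have hsplitfun : ∀ t ∈ Ioc (0:ℝ) 1,
        ((t ^ (s - 1) : ℝ) : ℂ) * R t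
          + ∑ j ∈ Finset.range (n+1),
            ((t ^ (s - 1) : ℝ) : ℂ) * (a j * ((t ^ ((j : ℝ) - r) : ℝ) : ℂ))
        = ((t ^ (s - 1) : ℝ) : ℂ) * h t := by
      intro t _
      rw [hRdef]
      simp only [mul_sub]
      rw [← Finset.mul_sum]
      ring
    have hsum2 : IntegrableOn (fun t : ℝ => ((t ^ (s - 1) : ℝ) : ℂ) * R t
          + ∑ j ∈ Finset.range (n+1),
            ((t ^ (s - 1) : ℝ) : ℂ) * (a j * ((t ^ ((j : ℝ) - r) : ℝ) : ℂ)))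
        (Ioc 0 1) volume := hkey.add hintsum
    have hIntH : IntegrableOn (fun t : ℝ => ((t ^ (s - 1) : ℝ) : ℂ) * h t) (Ioc 0 1) volume :=
      hsum2.congr_fun hsplitfun measurableSet_Ioc
    refine ⟨hIntH, ?_⟩
    -- integral identity
    have hpowint : ∀ j : ℕ, j ∈ Finset.range (n + 1) →
        (∫ t in Ioc (0:ℝ) 1, ((t ^ (s - 1) : ℝ) : ℂ) *
            (a j * ((t ^ ((j : ℝ) - r) : ℝ) : ℂ)))
          = a j * (((s + (j : ℝ) - r)⁻¹ : ℝ) : ℂ) := by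
      intro j _
      have hp : (-1:ℝ) < s + (j:ℝ) - r - 1 := by
        have : (0:ℝ) ≤ (j:ℝ) := Nat.cast_nonneg j
        linarith
      have h2 : (∫ t in Ioc (0:ℝ) 1, (t : ℝ) ^ (s + (j:ℝ) - r - 1)) = (s + (j:ℝ) - r)⁻¹ := by
        rw [← intervalIntegral.integral_of_le zero_le_one, integral_rpow (Or.inl hp)]
        rw [Real.one_rpow, Real.zero_rpow (by linarith)]
        field_simp
        ring
      calc (∫ t in Ioc (0:ℝ) 1, ((t ^ (s - 1) : ℝ) : ℂ) *
            (a j * ((t ^ ((j : ℝ) - r) : ℝ) : ℂ)))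
          = ∫ t in Ioc (0:ℝ) 1, a j * (((t : ℝ) ^ (s + (j:ℝ) - r - 1) : ℝ) : ℂ) := by
            refine setIntegral_congr_fun measurableSet_Ioc fun t ht => ?_
            rw [show s + (j:ℝ) - r - 1 = (s - 1) + ((j:ℝ) - r) by ring, Real.rpow_add ht.1]
            push_cast
            ring
        _ = a j * (((s + (j : ℝ) - r)⁻¹ : ℝ) : ℂ) := by
            rw [integral_const_mul,
              show (∫ t in Ioc (0:ℝ) 1, (((t : ℝ) ^ (s + (j:ℝ) - r - 1) : ℝ) : ℂ))
                = (((∫ t in Ioc (0:ℝ) 1, (t : ℝ) ^ (s + (j:ℝ) - r - 1)) : ℝ) : ℂ)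
                from integral_ofReal, h2]
    rw [hG s]
    have : (∫ t in Ioc (0:ℝ) 1, ((t ^ (s - 1) : ℝ) : ℂ) * h t)
        = (∫ t in Ioc (0:ℝ) 1, ((t ^ (s - 1) : ℝ) : ℂ) * R t)
          + ∑ j ∈ Finset.range (n+1), a j * (((s + (j : ℝ) - r)⁻¹ : ℝ) : ℂ) := by
      rw [← Finset.sum_congr rfl hpowint, ← integral_finset_sum _ hpow,
        ← integral_add hkey hintsum]
      exact (setIntegral_congr_fun measurableSet_Ioc hsplitfun).symm
    rw [this, mul_add, mul_comm ((Real.Gamma s : ℂ))⁻¹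
      (∑ j ∈ Finset.range (n+1), a j * (((s + (j : ℝ) - r)⁻¹ : ℝ) : ℂ)), Finset.sum_mul]
    ring
  constructor
  · exact key
  · -- differentiability at 0
    rw [hGeq]
    have hofReal : Differentiable ℝ (fun s : ℝ => (s : ℂ)) := Complex.ofRealCLM.differentiable
    have hGamma : DifferentiableAt ℝ (fun s : ℝ => (Complex.Gamma (s:ℂ))⁻¹) 0 :=
      ((Complex.differentiable_one_div_Gamma ((0:ℝ):ℂ)).restrictScalars ℝ).comp 0
        (hofReal 0)
    have hMel : DifferentiableAt ℝ (fun s : ℝ => mellin f (s : ℂ)) 0 := by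
      have h0 : DifferentiableAt ℂ (mellin f) ((0:ℝ):ℂ) := by
        refine mellin_differentiableAt_of_isBigO_rpow hfloc (hftop 1) ?_ hfbot ?_
        · simp
        · simp; linarith
      exact (h0.restrictScalars ℝ).comp 0 (hofReal 0)
    apply DifferentiableAt.add
    · apply DifferentiableAt.fun_sum
      intro j _
      have hne : (0:ℝ) + (j:ℝ) - r ≠ 0 := by
        intro hzero
        exact hr j (by push_cast at hzero ⊢; linarith)
      have hinv : DifferentiableAt ℝ (fun s : ℝ => (s + (j:ℝ) - r)⁻¹) 0 :=
        (((differentiableAt_fun_id).add_const _).sub_const _).inv hne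
      exact (differentiableAt_const (a j)).mul
        ((Complex.ofRealCLM.differentiableAt).comp 0 hinv) |>.mul hGamma
    · exact hGamma.mul hMel
end

section
/- Let R > 0 and let s be a real number with s > 1/2. Then (1/Γ(s)) · ∫₀^∞ t^{s−1} · ( Σ_{n ∈ ℤ, n ≠ 0} exp(−t·(2πn/R)²) ) dt = 2 · (R/(2π))^{2s} · ζ(2s), where ζ is the Riemann zeta function; in particular the sum converges for every t > 0 and the integral converges. -/
open MeasureTheory Real Set

lemma aux_sum_int {a : ℝ} (ha : 0 < a) : Summable fun n : ℤ => Real.exp (-a * (n:ℝ)^2) := by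
  have hnat : Summable fun n : ℕ => Real.exp (-a * (n:ℝ)^2) := by
    refine Summable.of_nonneg_of_le (fun n => (Real.exp_pos _).le) (fun n => ?_)
      (Real.summable_exp_nat_mul_iff.mpr (neg_neg_iff_pos.mpr ha))
    rw [Real.exp_le_exp]
    have h1 : (n:ℝ) ≤ (n:ℝ)^2 := by
      exact_mod_cast Nat.cast_le.mpr (Nat.le_self_pow two_ne_zero n)
    have h2 := mul_le_mul_of_nonneg_left h1 ha.le
    linarith
  apply Summable.of_nat_of_neg
  · exact hnat
  · simpa using hnat

set_option maxHeartbeats 2000000 in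
theorem stmt_7 (R : ℝ) (hR : 0 < R) (s : ℝ) (hs : 1/2 < s) :
    (∀ t : ℝ, 0 < t →
      Summable fun n : {n : ℤ // n ≠ 0} =>
        Real.exp (-t * (2 * π * ((n : ℤ) : ℝ) / R) ^ 2)) ∧
    IntegrableOn (fun t : ℝ => t ^ (s - 1) *
      ∑' n : {n : ℤ // n ≠ 0}, Real.exp (-t * (2 * π * ((n : ℤ) : ℝ) / R) ^ 2))
      (Ioi 0) volume ∧
    ((1 / Real.Gamma s * ∫ t in Ioi (0:ℝ), t ^ (s - 1) *
        ∑' n : {n : ℤ // n ≠ 0}, Real.exp (-t * (2 * π * ((n : ℤ) : ℝ) / R) ^ 2) : ℝ) : ℂ)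
      = 2 * (((R / (2 * π)) ^ (2 * s) : ℝ) : ℂ) * riemannZeta ((2 * s : ℝ) : ℂ) := by
  have hπ : (0:ℝ) < π := pi_pos
  have hs0 : 0 < s := by linarith
  have h2s : 1 < 2 * s := by linarith
  have h2s0 : -(2*s) ≠ 0 := by intro h; nlinarith [neg_eq_zero.mp h]
  set c : {n : ℤ // n ≠ 0} → ℝ := fun n => (2 * π * ((n : ℤ) : ℝ) / R) ^ 2 with hc_def
  have hnne : ∀ n : {n : ℤ // n ≠ 0}, ((n : ℤ) : ℝ) ≠ 0 := fun n =>
    Int.cast_ne_zero.mpr n.2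
  have hc : ∀ n, 0 < c n := by
    intro n
    have h := hnne n
    have : 2 * π * ((n : ℤ) : ℝ) / R ≠ 0 := by positivity
    positivity
  have hexp : ∀ (n : {n : ℤ // n ≠ 0}) (t : ℝ),
      -t * c n = -(t * (2 * π / R)^2) * ((n:ℤ):ℝ)^2 := by
    intro n t; simp only [hc_def]; ring
  -- first conjunct
  have hsum : ∀ t : ℝ, 0 < t →
      Summable fun n : {n : ℤ // n ≠ 0} => Real.exp (-t * (2 * π * ((n : ℤ) : ℝ) / R) ^ 2) := by
    intro t ht
    have ha : 0 < t * (2 * π / R)^2 := by positivity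
    have := (aux_sum_int ha).subtype {n : ℤ | n ≠ 0}
    refine this.congr fun n => ?_
    simp only [Function.comp_apply]
    rw [← hexp n t, hc_def]
  -- terms of the series under the integral
  set g : {n : ℤ // n ≠ 0} → ℝ → ℝ := fun n t => t ^ (s-1) * Real.exp (-t * c n) with hg_def
  have hg_nonneg : ∀ n, ∀ t ∈ Ioi (0:ℝ), 0 ≤ g n t := by
    intro n t ht
    have ht' : (0:ℝ) < t := ht
    have : 0 ≤ t ^ (s-1) := Real.rpow_nonneg ht'.le _
    positivity
  -- integrability of each term
  have hint : ∀ n, IntegrableOn (g n) (Ioi 0) volume := by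
    intro n
    have h := integrableOn_rpow_mul_exp_neg_mul_rpow (s := s-1) (p := 1) (b := c n)
      (by linarith) one_pos (hc n)
    refine h.congr_fun (fun t ht => ?_) measurableSet_Ioi
    rw [hg_def]
    simp only [Real.rpow_one]
    ring_nf
  -- value of each integral
  have hI : ∀ n, ∫ t in Ioi (0:ℝ), g n t = (1 / c n) ^ s * Real.Gamma s := by
    intro n
    have h : ∀ t : ℝ, g n t = t ^ (s-1) * Real.exp (-(c n * t)) := by
      intro t; rw [hg_def]; ring_nf
    simp_rw [h]
    exact Real.integral_rpow_mul_exp_neg_mul_Ioi hs0 (hc n)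
  -- value of (1/c n)^s
  set B : ℝ := R / (2*π) with hB_def
  have hB : 0 < B := by positivity
  have hval : ∀ n, (1 / c n) ^ s = B ^ (2*s) * |((n:ℤ):ℝ)| ^ (-(2*s)) := by
    intro n
    have hx := hnne n
    have h1 : 1 / c n = (B / |((n:ℤ):ℝ)|)^2 := by
      rw [show c n = (2 * π * ((n:ℤ):ℝ) / R)^2 from rfl, hB_def,
        div_pow, div_pow, sq_abs, div_pow]
      field_simp
    rw [h1, ← Real.rpow_natCast (B / |((n:ℤ):ℝ)|) 2, ← Real.rpow_mul (by positivity)]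
    push_cast
    rw [Real.div_rpow hB.le (abs_nonneg _), div_eq_mul_inv,
      ← Real.rpow_neg (abs_nonneg _)]
  -- summability of the integrals
  have habs : Summable fun n : {n : ℤ // n ≠ 0} => |((n:ℤ):ℝ)| ^ (-(2*s)) := by
    have := (Real.summable_abs_int_rpow h2s).subtype {n : ℤ | n ≠ 0}
    exact this.congr fun n => rfl
  have hS : Summable fun n => (1 / c n) ^ s * Real.Gamma s := by
    refine (((habs.mul_left (B ^ (2*s))).mul_right (Real.Gamma s)).congr fun n => ?_)
    rw [hval]
  have hS_nonneg : ∀ n, 0 ≤ (1 / c n) ^ s * Real.Gamma s := by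
    intro n
    have := (hc n)
    have hΓ := Real.Gamma_pos_of_pos hs0
    positivity
  -- lintegral of each term
  have hg_meas : ∀ n, AEStronglyMeasurable (g n) (volume.restrict (Ioi 0)) :=
    fun n => (hint n).aestronglyMeasurable
  have hlint : ∀ n, ∫⁻ t, ‖g n t‖₊ ∂(volume.restrict (Ioi 0))
      = ENNReal.ofReal ((1 / c n) ^ s * Real.Gamma s) := by
    intro n
    rw [← hI n, ofReal_integral_eq_lintegral_ofReal (hint n)
      ((ae_restrict_mem measurableSet_Ioi).mono fun t ht => hg_nonneg n t ht)]
    refine lintegral_congr_ae ?_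
    filter_upwards [ae_restrict_mem measurableSet_Ioi] with t ht
    exact Real.enorm_eq_ofReal (hg_nonneg n t ht)
  have hfin : ∑' n, ∫⁻ t, ‖g n t‖₊ ∂(volume.restrict (Ioi 0)) ≠ ⊤ := by
    simp_rw [hlint]
    rw [← ENNReal.ofReal_tsum_of_nonneg hS_nonneg hS]
    exact ENNReal.ofReal_ne_top
  -- rewrite the integrand as a tsum of g
  have hfun : (fun t : ℝ => t ^ (s - 1) *
      ∑' n : {n : ℤ // n ≠ 0}, Real.exp (-t * (2 * π * ((n : ℤ) : ℝ) / R) ^ 2))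
      = fun t => ∑' n, g n t := by
    funext t
    rw [hg_def]
    exact (tsum_mul_left).symm
  -- a.e. identification with an NNReal tsum for measurability
  have hF_eq : ∀ t ∈ Ioi (0:ℝ), (∑' n, g n t) = ((∑' n, ‖g n t‖₊ : NNReal) : ℝ) := by
    intro t ht
    rw [NNReal.coe_tsum]
    refine tsum_congr fun n => ?_
    rw [coe_nnnorm, Real.norm_eq_abs, abs_of_nonneg (hg_nonneg n t ht)]
  have hsum_g : ∀ t ∈ Ioi (0:ℝ), Summable fun n => g n t := by
    intro t ht
    exact (hsum t ht).mul_left _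
  have hsum_nn : ∀ t ∈ Ioi (0:ℝ), Summable fun n => ‖g n t‖₊ := by
    intro t ht
    rw [← NNReal.summable_coe]
    refine (hsum_g t ht).congr fun n => ?_
    exact ((coe_nnnorm _).trans (Real.norm_of_nonneg (hg_nonneg n t ht))).symm
  have hmeasF : AEStronglyMeasurable (fun t => ((∑' n, ‖g n t‖₊ : NNReal) : ℝ))
      (volume.restrict (Ioi 0)) := by
    rw [aestronglyMeasurable_iff_aemeasurable]
    exact (AEMeasurable.nnreal_tsum fun n => (hg_meas n).nnnorm.aemeasurable).coe_nnreal_real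
  have hintegrable : IntegrableOn (fun t => ∑' n, g n t) (Ioi 0) volume := by
    constructor
    · refine hmeasF.congr ?_
      filter_upwards [ae_restrict_mem measurableSet_Ioi] with t ht
      exact (hF_eq t ht).symm
    · show (∫⁻ t, ‖∑' n, g n t‖₊ ∂(volume.restrict (Ioi 0))) < ⊤
      have hbound : ∫⁻ t, ‖∑' n, g n t‖₊ ∂(volume.restrict (Ioi 0))
          = ∑' n, ∫⁻ t, ‖g n t‖₊ ∂(volume.restrict (Ioi 0)) := by
        rw [← lintegral_tsum fun n => (hg_meas n).nnnorm.aemeasurable.coe_nnreal_ennreal]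
        refine lintegral_congr_ae ?_
        filter_upwards [ae_restrict_mem measurableSet_Ioi] with t ht
        rw [hF_eq t ht, NNReal.nnnorm_eq, ENNReal.coe_tsum (hsum_nn t ht)]
      rw [hbound]
      exact hfin.lt_top
  -- the exchange of sum and integral
  have hkey : ∫ t in Ioi (0:ℝ), ∑' n, g n t = ∑' n, ((1 / c n) ^ s * Real.Gamma s) := by
    rw [integral_tsum hg_meas hfin]
    exact tsum_congr hI
  refine ⟨hsum, by rw [hfun]; exact hintegrable, ?_⟩
  rw [hfun, hkey]
  -- now the arithmetic
  have hΓ : Real.Gamma s ≠ 0 := (Real.Gamma_pos_of_pos hs0).ne'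
  have hZsum : Summable fun n : ℕ => ((n:ℝ)) ^ (-(2*s)) := by
    rw [Real.summable_nat_rpow]
    linarith
  set Z : ℝ := ∑' n : ℕ, ((n:ℝ)) ^ (-(2*s)) with hZ_def
  have hT : (∑' n, (1 / c n) ^ s * Real.Gamma s)
      = Real.Gamma s * (B ^ (2*s) * ∑' n : {n : ℤ // n ≠ 0}, |((n:ℤ):ℝ)| ^ (-(2*s))) := by
    simp_rw [hval]
    rw [tsum_mul_right, tsum_mul_left]
    ring
  have hsupp : Function.support (fun n : ℤ => |(n:ℝ)| ^ (-(2*s))) ⊆ {n : ℤ | n ≠ 0} := by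
    intro n hn
    simp only [Function.mem_support] at hn
    intro h0
    apply hn
    rw [h0]
    simp [Real.zero_rpow h2s0]
  have hshift : ∑' n : ℕ, (((n:ℝ)) + 1) ^ (-(2*s)) = Z := by
    have h := Summable.tsum_eq_zero_add hZsum
    rw [hZ_def, h]
    push_cast
    rw [Real.zero_rpow h2s0, zero_add]
  have hsh_sum : Summable fun n : ℕ => (((n:ℝ)) + 1) ^ (-(2*s)) := by
    have h := (summable_nat_add_iff 1).mpr hZsum
    exact h.congr fun n => by push_cast; ring_nf
  have h1sum : Summable fun n : ℕ => |(((n:ℤ)):ℝ)| ^ (-(2*s)) := by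
    refine hZsum.congr fun n => ?_
    rw [abs_of_nonneg (by positivity : (0:ℝ) ≤ ((n:ℤ):ℝ))]
    norm_num
  have h2sumeq : ∀ n : ℕ, |(((-((n:ℕ)+1)):ℤ):ℝ)| ^ (-(2*s)) = (((n:ℝ)) + 1) ^ (-(2*s)) := by
    intro n
    congr 1
    push_cast
    rw [abs_neg, abs_of_nonneg (by positivity)]
  have hTZ : (∑' n : {n : ℤ // n ≠ 0}, |((n:ℤ):ℝ)| ^ (-(2*s))) = 2 * Z := by
    have hts : (∑' n : {n : ℤ // n ≠ 0}, |((n:ℤ):ℝ)| ^ (-(2*s)))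
        = ∑' n : ℤ, |(n:ℝ)| ^ (-(2*s)) :=
      tsum_subtype_eq_of_support_subset hsupp
    rw [hts, tsum_of_nat_of_neg_add_one h1sum
      ((hsh_sum.congr fun n => (h2sumeq n).symm))]
    have e1 : ∑' n : ℕ, |(((n:ℤ)):ℝ)| ^ (-(2*s)) = Z := by
      rw [hZ_def]
      refine tsum_congr fun n => ?_
      rw [abs_of_nonneg (by positivity : (0:ℝ) ≤ ((n:ℤ):ℝ))]
      norm_num
    have e2 : ∑' n : ℕ, |(((-((n:ℕ)+1)):ℤ):ℝ)| ^ (-(2*s)) = Z := by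
      rw [tsum_congr h2sumeq, hshift]
    rw [e1, e2]
    ring
  have hZC : (Z : ℂ) = riemannZeta ((2*s : ℝ) : ℂ) := by
    rw [zeta_eq_tsum_one_div_nat_cpow (by rw [Complex.ofReal_re]; exact h2s),
      hZ_def, Complex.ofReal_tsum]
    refine tsum_congr fun n => ?_
    rw [Real.rpow_neg n.cast_nonneg, Complex.ofReal_inv,
      Complex.ofReal_cpow n.cast_nonneg, one_div]
    norm_num
  rw [hT, hTZ, show (1 / Real.Gamma s * (Real.Gamma s * (B ^ (2*s) * (2 * Z))))
      = B ^ (2*s) * (2 * Z) by field_simp]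
  rw [Complex.ofReal_mul, Complex.ofReal_mul, Complex.ofReal_ofNat, hZC]
  ring
end

section
/- Let R > 0, let g ∈ ℝ with g ≠ 0, and let θ ∈ ℝ. Define 𝒯 : (0, ∞) → ℂ by 𝒯(t) = −(R/(2·√(π·t))) · exp(−R²g²/(4t)) · exp(−i·θ·g). Then the sum of the derivative at s = 0 of the real-variable function s ↦ (Γ(s))⁻¹ · ∫₀¹ t^{s−1} 𝒯(t) dt and the integral ∫₁^∞ t^{−1} 𝒯(t) dt equals −exp(−i·θ·g)/|g|. (Equivalently, the equivariant analytic torsion T_g of the flat connection d + iθ dx on the trivial line bundle over the real line with metric R²·dx², for the translation action of ℝ and the nonzero group element g, equals exp(exp(−iθg)/(2|g|)).) -/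
open MeasureTheory Real Set
open Topology Filter

lemma aux_sq_le_exp {x : ℝ} (hx : 0 ≤ x) : x^2/4 ≤ Real.exp x := by
  have h1 : x/2 + 1 ≤ Real.exp (x/2) := Real.add_one_le_exp _
  have h2 : Real.exp (x/2) * Real.exp (x/2) = Real.exp x := by
    rw [← Real.exp_add]; ring_nf
  nlinarith [Real.exp_pos (x/2)]

lemma aux_exp_bound {b t : ℝ} (hb : 0 < b) (ht : 0 < t) :
    Real.exp (-(b/t)) ≤ 4*t^2/b^2 := by
  have h0 : 0 < b / t := by positivity
  have h1 : (b/t)^2/4 ≤ Real.exp (b/t) := aux_sq_le_exp h0.le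
  rw [Real.exp_neg]
  calc (Real.exp (b/t))⁻¹ ≤ ((b/t)^2/4)⁻¹ := by
        apply inv_anti₀ (by positivity) h1
    _ = 4*t^2/b^2 := by field_simp
lemma aux_rpow32 {t : ℝ} (ht : 0 < t) : t ^ (-(3/2) : ℝ) = (t * Real.sqrt t)⁻¹ := by
  rw [show (-(3/2) : ℝ) = (-1) + (-(1/2)) by norm_num, Real.rpow_add ht,
    Real.rpow_neg_one, Real.rpow_neg ht.le, ← Real.sqrt_eq_rpow]
  exact (mul_inv t (Real.sqrt t)).symm

lemma aux_Gamma_inv (s : ℝ) : (Real.Gamma s)⁻¹ = s * (Real.Gamma (s+1))⁻¹ := by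
  rcases eq_or_ne s 0 with rfl | hs
  · simp [Real.Gamma_zero]
  · rw [Real.Gamma_add_one hs, mul_inv, ← mul_assoc, mul_inv_cancel₀ hs, one_mul]

lemma aux_integral {b : ℝ} (hb : 0 < b) :
    ∫ t in Ioi (0:ℝ), t ^ (-(3/2) : ℝ) * Real.exp (-(b/t)) = Real.sqrt π / Real.sqrt b := by
  have key := integral_comp_rpow_Ioi (fun y => y ^ ((1/2:ℝ)-1) * Real.exp (-(b*y)))
    (p := -1) (by norm_num)
  have h2 : ∫ y in Ioi (0:ℝ), y ^ ((1/2:ℝ)-1) * Real.exp (-(b*y))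
      = (1/b) ^ ((1/2):ℝ) * Real.Gamma (1/2) :=
    Real.integral_rpow_mul_exp_neg_mul_Ioi (by norm_num) hb
  rw [h2] at key
  have hs : (1/b) ^ ((1/2):ℝ) * Real.Gamma (1/2) = Real.sqrt π / Real.sqrt b := by
    rw [Real.Gamma_one_half_eq, ← Real.sqrt_eq_rpow, one_div, Real.sqrt_inv, inv_mul_eq_div]
  rw [← hs, ← key]
  apply setIntegral_congr_fun measurableSet_Ioi
  intro x hx
  simp only [smul_eq_mul, abs_neg, abs_one]
  have h3 : (x ^ (-1:ℝ)) ^ ((1/2:ℝ)-1) = x ^ ((1/2 : ℝ)) := by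
    rw [← Real.rpow_mul (le_of_lt hx)]; norm_num
  rw [h3, Real.rpow_neg_one]
  have h4 : b * x⁻¹ = b / x := by rw [div_eq_mul_inv]
  rw [h4, show ((-1:ℝ)-1) = -2 by norm_num]
  have h5 : (1:ℝ) * x ^ (-2:ℝ) * (x ^ ((1/2:ℝ)) * Real.exp (-(b/x)))
      = x ^ ((-2:ℝ)+(1/2)) * Real.exp (-(b/x)) := by
    rw [Real.rpow_add hx]; ring
  rw [h5]; norm_num

lemma aux_ptwise {R b t : ℝ} (ht : 0 < t) :
    t⁻¹ * (R / (2 * Real.sqrt (π * t)) * Real.exp (-(b/t)))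
      = R/(2*Real.sqrt π) * (t ^ (-(3/2):ℝ) * Real.exp (-(b/t))) := by
  have hst : 0 < Real.sqrt t := Real.sqrt_pos.mpr ht
  have hsp : 0 < Real.sqrt π := Real.sqrt_pos.mpr pi_pos
  obtain ⟨st, hstp, rfl⟩ : ∃ st : ℝ, 0 < st ∧ t = st^2 :=
    ⟨Real.sqrt t, hst, (Real.sq_sqrt ht.le).symm⟩
  rw [Real.sqrt_mul pi_pos.le, aux_rpow32 ht, Real.sqrt_sq hstp.le]
  field_simp

lemma aux_bound_const {R b t : ℝ} (hR : 0 < R) (hb : 0 < b) (ht : 0 < t) :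
    t ^ (-(3/2):ℝ) * (R / (2 * Real.sqrt (π * t)) * Real.exp (-(b/t)))
      ≤ 2*R/(Real.sqrt π * b^2) := by
  have hst : 0 < Real.sqrt t := Real.sqrt_pos.mpr ht
  have hsp : 0 < Real.sqrt π := Real.sqrt_pos.mpr pi_pos
  have ht2 : Real.sqrt t ^ 2 = t := Real.sq_sqrt ht.le
  have hE : Real.exp (-(b/t)) ≤ 4*t^2/b^2 := aux_exp_bound hb ht
  have hEpos : 0 < Real.exp (-(b/t)) := Real.exp_pos _
  rw [Real.sqrt_mul pi_pos.le, aux_rpow32 ht]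
  have heq : (t * Real.sqrt t)⁻¹ * (R / (2 * (Real.sqrt π * Real.sqrt t)) * Real.exp (-(b/t)))
      = R * Real.exp (-(b/t)) / (2*Real.sqrt π*t^2) := by
    rw [show t^2 = (t * Real.sqrt t) * Real.sqrt t by nlinarith]
    field_simp
  rw [heq, div_le_div_iff₀ (by positivity) (by positivity)]
  have hE' : Real.exp (-(b/t)) * b^2 ≤ 4*t^2 := by
    rw [← le_div_iff₀ (by positivity)]; exact hE
  nlinarith [mul_nonneg (mul_nonneg hR.le hsp.le) (sub_nonneg.mpr hE'), mul_pos hsp (mul_pos ht ht)]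

lemma aux_ucont {R b : ℝ} :
    ContinuousOn (fun t : ℝ => R / (2 * Real.sqrt (π * t)) * Real.exp (-(b/t))) (Ioi 0) := by
  apply ContinuousOn.mul
  · apply ContinuousOn.div continuousOn_const
    · exact (continuous_const.mul (Real.continuous_sqrt.comp
        (continuous_const.mul continuous_id))).continuousOn
    · intro t ht
      have h1 : (0:ℝ) < π * t := mul_pos pi_pos ht
      positivity
  · exact Real.continuous_exp.comp_continuousOn
      ((continuousOn_const.div continuousOn_id (fun t ht => ne_of_gt ht)).neg)

lemma aux_umeas {R b : ℝ} :
    Measurable (fun t : ℝ => R / (2 * Real.sqrt (π * t)) * Real.exp (-(b/t))) := by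
  fun_prop

lemma aux_contG {R b : ℝ} (hR : 0 < R) (hb : 0 < b) :
    ContinuousAt (fun s : ℝ => ∫ t in Ioc (0:ℝ) 1,
      t ^ (s-1) * -(R / (2 * Real.sqrt (π * t)) * Real.exp (-(b/t)))) 0 := by
  apply continuousAt_of_dominated
    (bound := fun t => t ^ (-(3/2):ℝ) * (R / (2 * Real.sqrt (π*t)) * Real.exp (-(b/t))))
  · filter_upwards with s
    exact (((by fun_prop : Measurable fun t : ℝ => t ^ (s-1))).mul
      aux_umeas.neg).aestronglyMeasurable
  · filter_upwards [Ioo_mem_nhds (by norm_num : (-(1/2):ℝ) < 0) (by norm_num : (0:ℝ) < 1/2)]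
      with s hs
    filter_upwards [ae_restrict_mem measurableSet_Ioc] with t ht
    rw [norm_mul, norm_neg, Real.norm_eq_abs, Real.norm_eq_abs,
      abs_of_nonneg (Real.rpow_nonneg ht.1.le _), abs_of_nonneg (by positivity)]
    apply mul_le_mul_of_nonneg_right _ (by positivity)
    exact Real.rpow_le_rpow_of_exponent_ge ht.1 ht.2 (by nlinarith [hs.1])
  · refine Measure.integrableOn_of_bounded (M := 2*R/(Real.sqrt π * b^2)) measure_Ioc_lt_top.ne
      (((by fun_prop : Measurable fun t : ℝ => t ^ (-(3/2):ℝ)).mul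
        aux_umeas).aestronglyMeasurable) ?_
    filter_upwards [ae_restrict_mem measurableSet_Ioc] with t ht
    rw [Real.norm_eq_abs,
      abs_of_nonneg (mul_nonneg (Real.rpow_nonneg ht.1.le _) (by positivity))]
    exact aux_bound_const hR hb ht.1
  · filter_upwards [ae_restrict_mem measurableSet_Ioc] with t ht
    apply ContinuousAt.mul _ continuousAt_const
    exact (Real.continuousAt_const_rpow (ne_of_gt ht.1)).comp
      ((continuousAt_id).sub continuousAt_const)

lemma aux_int_Ioc {R b : ℝ} (hR : 0 < R) (hb : 0 < b) :
    IntegrableOn (fun t : ℝ => t⁻¹ * -(R / (2 * Real.sqrt (π * t)) * Real.exp (-(b/t))))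
      (Ioc 0 1) := by
  refine Measure.integrableOn_of_bounded (M := 2*R/(Real.sqrt π * b^2)) measure_Ioc_lt_top.ne
    ((measurable_inv.mul aux_umeas.neg).aestronglyMeasurable) ?_
  filter_upwards [ae_restrict_mem measurableSet_Ioc] with t ht
  rw [norm_mul, norm_neg, Real.norm_eq_abs, Real.norm_eq_abs,
    abs_of_nonneg (inv_nonneg.mpr ht.1.le), abs_of_nonneg (by positivity)]
  calc t⁻¹ * (R / (2 * Real.sqrt (π * t)) * Real.exp (-(b/t)))
      ≤ t ^ (-(3/2):ℝ) * (R / (2 * Real.sqrt (π * t)) * Real.exp (-(b/t))) := by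
        apply mul_le_mul_of_nonneg_right _ (by positivity)
        rw [← Real.rpow_neg_one t]
        exact Real.rpow_le_rpow_of_exponent_ge ht.1 ht.2 (by norm_num)
    _ ≤ 2*R/(Real.sqrt π * b^2) := aux_bound_const hR hb ht.1

lemma aux_int_Ioi {R b : ℝ} (hR : 0 < R) (hb : 0 < b) :
    IntegrableOn (fun t : ℝ => t⁻¹ * -(R / (2 * Real.sqrt (π * t)) * Real.exp (-(b/t))))
      (Ioi 1) := by
  have hint : IntegrableOn (fun t : ℝ => R/(2*Real.sqrt π) * t ^ (-(3/2):ℝ)) (Ioi 1) :=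
    (integrableOn_Ioi_rpow_of_lt (by norm_num : (-(3/2):ℝ) < -1) one_pos).const_mul _
  apply Integrable.mono hint
  · exact (measurable_inv.mul aux_umeas.neg).aestronglyMeasurable
  · filter_upwards [ae_restrict_mem measurableSet_Ioi] with t ht
    have ht0 : (0:ℝ) < t := lt_trans one_pos ht
    rw [norm_mul, norm_neg, Real.norm_eq_abs, Real.norm_eq_abs, Real.norm_eq_abs,
      abs_of_nonneg (inv_nonneg.mpr ht0.le), abs_of_nonneg (by positivity),
      abs_of_nonneg (mul_nonneg (by positivity) (Real.rpow_nonneg ht0.le _))]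
    rw [aux_ptwise ht0]
    apply mul_le_mul_of_nonneg_left _ (by positivity)
    calc t ^ (-(3/2):ℝ) * Real.exp (-(b/t)) ≤ t ^ (-(3/2):ℝ) * 1 := by
          apply mul_le_mul_of_nonneg_left _ (Real.rpow_nonneg ht0.le _)
          exact Real.exp_le_one_iff.mpr (neg_nonpos.mpr (by positivity))
      _ = t ^ (-(3/2):ℝ) := mul_one _

lemma aux_total {R b : ℝ} (hR : 0 < R) (hb : 0 < b) :
    ∫ t in Ioi (0:ℝ), t⁻¹ * -(R / (2 * Real.sqrt (π * t)) * Real.exp (-(b/t)))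
      = -(R/(2*Real.sqrt π) * (Real.sqrt π / Real.sqrt b)) := by
  have hcong : ∀ t ∈ Ioi (0:ℝ), t⁻¹ * -(R / (2 * Real.sqrt (π * t)) * Real.exp (-(b/t)))
      = -(R/(2*Real.sqrt π)) * (t ^ (-(3/2):ℝ) * Real.exp (-(b/t))) := by
    intro t ht
    have := aux_ptwise (R := R) (b := b) ht
    rw [mul_neg, this]; ring
  rw [setIntegral_congr_fun measurableSet_Ioi hcong, integral_const_mul, aux_integral hb]
  ring

theorem stmt_9 (R g θ : ℝ) (hR : 0 < R) (hg : g ≠ 0)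
    (𝒯 : ℝ → ℂ)
    (h𝒯 : ∀ t : ℝ, 0 < t → 𝒯 t =
      -((R / (2 * Real.sqrt (π * t)) : ℝ) : ℂ) *
        Complex.exp ((-(R ^ 2 * g ^ 2) / (4 * t) : ℝ) : ℂ) *
        Complex.exp (-(Complex.I * (θ : ℂ) * (g : ℂ)))) :
    deriv (fun s : ℝ => ((Real.Gamma s : ℂ))⁻¹ *
        ∫ t in Ioc (0:ℝ) 1, ((t ^ (s - 1) : ℝ) : ℂ) * 𝒯 t) 0
      + ∫ t in Ici (1:ℝ), ((t : ℂ))⁻¹ * 𝒯 t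
      = -Complex.exp (-(Complex.I * (θ : ℂ) * (g : ℂ))) / ((|g| : ℝ) : ℂ) := by
  have hg2 : (0:ℝ) < g^2 := lt_of_le_of_ne (sq_nonneg g) (Ne.symm (pow_ne_zero 2 hg))
  set c : ℂ := Complex.exp (-(Complex.I * (θ : ℂ) * (g : ℂ))) with hc
  set b : ℝ := R^2*g^2/4 with hbdef
  have hb : (0:ℝ) < b := by rw [hbdef]; positivity
  set u : ℝ → ℝ := fun t => R / (2 * Real.sqrt (π * t)) * Real.exp (-(b/t)) with hu
  -- rewrite 𝒯
  have hu𝒯 : ∀ t ∈ Ioi (0:ℝ), 𝒯 t = ((-(u t) : ℝ) : ℂ) * c := by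
    intro t ht
    rw [h𝒯 t ht]
    have he : (-(R ^ 2 * g ^ 2) / (4 * t) : ℝ) = -(b/t) := by
      rw [hbdef, div_div, neg_div]
    rw [he, ← Complex.ofReal_exp, hu]
    push_cast
    ring
  -- the inner integral
  set G : ℝ → ℝ := fun s => ∫ t in Ioc (0:ℝ) 1, t ^ (s-1) * -(u t) with hGdef
  have hinner : ∀ s : ℝ, (∫ t in Ioc (0:ℝ) 1, ((t ^ (s - 1) : ℝ) : ℂ) * 𝒯 t)
      = ((G s : ℝ) : ℂ) * c := by
    intro s
    have hcong : ∀ t ∈ Ioc (0:ℝ) 1, ((t ^ (s-1):ℝ):ℂ) * 𝒯 t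
        = (fun t : ℝ => ((t ^ (s-1) * -(u t) : ℝ) : ℂ) * c) t := by
      intro t ht
      rw [hu𝒯 t ht.1]
      push_cast
      ring
    rw [setIntegral_congr_fun measurableSet_Ioc hcong, integral_mul_const]
    exact congrArg (· * c) integral_ofReal
  -- continuity of G at 0
  have hGcont : ContinuousAt G 0 := by
    rw [hGdef, hu]
    exact aux_contG hR hb
  -- the derivative
  have hΦ : HasDerivAt (fun s : ℝ => ((Real.Gamma s : ℝ) : ℂ)⁻¹ * (((G s : ℝ)) : ℂ) * c)
      (((G 0 : ℝ) : ℂ) * c) 0 := by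
    rw [hasDerivAt_iff_tendsto_slope]
    have hΓ1 : ∀ m : ℕ, (0:ℝ)+1 ≠ -m :=
      fun m => ne_of_gt (by nlinarith [Nat.cast_nonneg (α := ℝ) m])
    have key : Filter.Tendsto (fun s : ℝ => (Real.Gamma (s+1))⁻¹ * G s) (𝓝 0)
        (𝓝 ((Real.Gamma (0+1))⁻¹ * G 0)) := by
      apply ContinuousAt.mul _ hGcont
      have hadd : ContinuousAt (fun s : ℝ => s + 1) 0 :=
        (continuous_id.add continuous_const).continuousAt
      have hΓc : ContinuousAt (fun s : ℝ => Real.Gamma (s+1)) 0 := by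
        show ContinuousAt (Real.Gamma ∘ (fun s : ℝ => s + 1)) 0
        exact ContinuousAt.comp (x := 0) ((Real.differentiableAt_Gamma hΓ1).continuousAt) hadd
      apply ContinuousAt.inv₀ hΓc
      rw [zero_add, Real.Gamma_one]; norm_num
    rw [zero_add, Real.Gamma_one, inv_one, one_mul] at key
    have key2 : Filter.Tendsto (fun s : ℝ => (((Real.Gamma (s+1))⁻¹ * G s : ℝ) : ℂ) * c) (𝓝[≠] 0)
        (𝓝 (((G 0 : ℝ) : ℂ) * c)) := by
      apply Tendsto.mul_const
      exact (Complex.continuous_ofReal.tendsto _).comp (key.mono_left nhdsWithin_le_nhds)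
    apply key2.congr'
    filter_upwards [self_mem_nhdsWithin] with s hs
    have hs0 : s ≠ 0 := hs
    rw [slope_def_module]
    have hΦ0 : ((Real.Gamma (0:ℝ) : ℝ) : ℂ)⁻¹ * (((G 0 : ℝ)) : ℂ) * c = 0 := by
      rw [Real.Gamma_zero]
      push_cast
      simp
    rw [hΦ0, sub_zero, sub_zero, ← Complex.ofReal_inv, aux_Gamma_inv s]
    have hsC : (s : ℂ) ≠ 0 := Complex.ofReal_ne_zero.mpr hs0
    push_cast
    rw [Complex.real_smul]
    push_cast
    field_simp
  -- second integral
  have hIci : (∫ t in Ici (1:ℝ), ((t : ℂ))⁻¹ * 𝒯 t)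
      = ((∫ t in Ioi (1:ℝ), t⁻¹ * -(u t) : ℝ) : ℂ) * c := by
    rw [integral_Ici_eq_integral_Ioi]
    have hcong : ∀ t ∈ Ioi (1:ℝ), ((t:ℂ))⁻¹ * 𝒯 t
        = (fun t : ℝ => ((t⁻¹ * -(u t) : ℝ) : ℂ) * c) t := by
      intro t ht
      rw [hu𝒯 t (mem_Ioi.mpr (lt_trans one_pos ht))]
      push_cast
      ring
    rw [setIntegral_congr_fun measurableSet_Ioi hcong, integral_mul_const]
    exact congrArg (· * c) integral_ofReal
  -- splitting
  have hsplit : G 0 + (∫ t in Ioi (1:ℝ), t⁻¹ * -(u t)) = ∫ t in Ioi (0:ℝ), t⁻¹ * -(u t) := by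
    have h1 : G 0 = ∫ t in Ioc (0:ℝ) 1, t⁻¹ * -(u t) := by
      rw [hGdef]
      refine setIntegral_congr_fun measurableSet_Ioc (fun t ht => ?_)
      rw [show (0:ℝ)-1 = -1 by norm_num, Real.rpow_neg_one]
    rw [h1, ← Ioc_union_Ioi_eq_Ioi (zero_le_one (α := ℝ))]
    refine (setIntegral_union Ioc_disjoint_Ioi_same measurableSet_Ioi ?_ ?_).symm
    · rw [hu]; exact aux_int_Ioc hR hb
    · rw [hu]; exact aux_int_Ioi hR hb
  have htot : (∫ t in Ioi (0:ℝ), t⁻¹ * -(u t))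
      = -(R/(2*Real.sqrt π) * (Real.sqrt π / Real.sqrt b)) := by
    rw [hu]; exact aux_total hR hb
  have hval : R/(2*Real.sqrt π) * (Real.sqrt π / Real.sqrt b) = 1/|g| := by
    have hsb : Real.sqrt b = R * |g| / 2 := by
      rw [show b = (R*|g|/2)^2 by rw [hbdef, div_pow, mul_pow, sq_abs]; norm_num]
      exact Real.sqrt_sq (by positivity)
    have hπ : Real.sqrt π ≠ 0 := ne_of_gt (Real.sqrt_pos.mpr pi_pos)
    have hga : |g| ≠ 0 := abs_ne_zero.mpr hg
    rw [hsb]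
    field_simp
  -- assemble
  simp only [hinner, ← mul_assoc]
  rw [hΦ.deriv, hIci, ← add_mul, ← Complex.ofReal_add, hsplit, htot, hval]
  push_cast
  have hga : ((|g| : ℝ) : ℂ) ≠ 0 := by
    simpa using abs_ne_zero.mpr hg
  field_simp
end

section
/- Let σ > 0 be a real number. The real-variable function s ↦ Γ(s − 1/2) · σ^{1/2 − s} · (Γ(s))⁻¹ is differentiable at s = 0 with derivative equal to −2·√(π·σ). -/
open Real

lemma inv_Gamma_eq (s : ℝ) : (Real.Gamma s)⁻¹ = s * (Real.Gamma (s + 1))⁻¹ := by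
  rcases eq_or_ne s 0 with rfl | hs
  · simp [Real.Gamma_zero]
  · rw [Real.Gamma_add_one hs, mul_inv, ← mul_assoc, mul_inv_cancel₀ hs, one_mul]

theorem stmt_10 (σ : ℝ) (hσ : 0 < σ) :
    HasDerivAt (fun s : ℝ => Real.Gamma (s - 1/2) * σ ^ (1/2 - s) * (Real.Gamma s)⁻¹)
      (-2 * Real.sqrt (π * σ)) 0 := by
  have hG : Real.Gamma (-(1/2) : ℝ) = -2 * √π := by
    have h := Real.Gamma_add_one (s := (-(1/2) : ℝ)) (by norm_num)
    rw [show (-(1/2) : ℝ) + 1 = 1/2 by norm_num, Real.Gamma_one_half_eq] at h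
    field_simp at h ⊢
    linarith
  -- differentiability pieces
  have hA : HasDerivAt (fun s : ℝ => Real.Gamma (s - 1/2))
      (deriv Real.Gamma (-(1/2))) 0 := by
    have hd : DifferentiableAt ℝ Real.Gamma (-(1/2)) := by
      apply Real.differentiableAt_Gamma
      intro m
      intro h
      have : ((1:ℝ)/2) = m := by push_cast at h ⊢; linarith
      rcases m with _ | m <;> [norm_num at this; (push_cast at this; nlinarith [Nat.cast_nonneg (α := ℝ) m])]
    have h0 : HasDerivAt Real.Gamma (deriv Real.Gamma (-(1/2))) ((0:ℝ) - 1/2) := by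
      rw [show (0:ℝ) - 1/2 = -(1/2) by norm_num]; exact hd.hasDerivAt
    have := h0.comp 0 ((hasDerivAt_id (0:ℝ)).sub_const (1/2))
    simpa [Function.comp_def] using this
  have hB : HasDerivAt (fun s : ℝ => σ ^ (1/2 - s))
      (-(σ ^ ((1:ℝ)/2) * Real.log σ)) 0 := by
    have h1 : HasDerivAt (fun s : ℝ => (1/2 - s)) (-1) 0 := by
      exact ((hasDerivAt_const 0 ((1:ℝ)/2)).sub (hasDerivAt_id 0)).congr_deriv (by norm_num)
    have h2 := (Real.hasStrictDerivAt_const_rpow hσ ((1:ℝ)/2 - 0)).hasDerivAt.comp 0 h1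
    simpa [mul_comm, Function.comp_def] using h2
  have hD : HasDerivAt (fun s : ℝ => (Real.Gamma (s + 1))⁻¹)
      (deriv (fun s : ℝ => (Real.Gamma (s + 1))⁻¹) 0) 0 := by
    have hd : DifferentiableAt ℝ Real.Gamma 1 := by
      apply Real.differentiableAt_Gamma
      intro m h
      rcases m with _ | m <;> [norm_num at h; (push_cast at h; nlinarith [Nat.cast_nonneg (α := ℝ) m])]
    have h1 : DifferentiableAt ℝ (fun s : ℝ => Real.Gamma (s + 1)) 0 := by
      have hd' : DifferentiableAt ℝ Real.Gamma ((0:ℝ) + 1) := by norm_num; exact hd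
      exact DifferentiableAt.comp (g := Real.Gamma) (f := fun s : ℝ => s + 1) 0 hd' (differentiableAt_id.add_const (1:ℝ))
    have : DifferentiableAt ℝ (fun s : ℝ => (Real.Gamma (s + 1))⁻¹) 0 := by
      apply h1.inv
      simp [Real.Gamma_one]
    exact this.hasDerivAt
  have hC : HasDerivAt (fun s : ℝ => s * (Real.Gamma (s + 1))⁻¹)
      (1 : ℝ) 0 := by
    have := (hasDerivAt_id (0:ℝ)).mul hD
    exact this.congr_deriv (by simp [Real.Gamma_one])
  have key := (hA.mul hB).mul hC
  have : HasDerivAt (fun s : ℝ => Real.Gamma (s - 1/2) * σ ^ (1/2 - s) * (Real.Gamma s)⁻¹)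
      ((deriv Real.Gamma (-(1/2)) * σ ^ ((1:ℝ)/2 - 0) +
        Real.Gamma (0 - 1/2) * -(σ ^ ((1:ℝ)/2) * Real.log σ)) * (0 * (Real.Gamma (0+1))⁻¹) +
       Real.Gamma (0 - 1/2) * σ ^ ((1:ℝ)/2 - 0) * 1) 0 := by
    have heq : (fun s : ℝ => Real.Gamma (s - 1/2) * σ ^ (1/2 - s) * (Real.Gamma s)⁻¹)
        = (fun s : ℝ => Real.Gamma (s - 1/2) * σ ^ (1/2 - s) * (s * (Real.Gamma (s + 1))⁻¹)) := by
      funext s; rw [inv_Gamma_eq]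
    rw [heq]; exact key
  convert this using 1
  rw [show (0:ℝ) - 1/2 = -(1/2) by norm_num, hG, show (1:ℝ)/2 - 0 = 1/2 by norm_num,
    show σ ^ ((1:ℝ)/2) = √σ from (Real.sqrt_eq_rpow σ).symm, Real.sqrt_mul pi_pos.le]
  ring
end

section
/- Let R > 0 and θ ∈ ℝ, and define κ : (0,∞) × ℝ × ℝ → ℂ by κ(t, x, y) = (R/(2√(π·t))) · exp(−R²(x−y)²/(4t) − i·θ·(x−y)). Then κ satisfies the heat equation of the twisted Laplacian Δ = −(1/R²)·(∂/∂x + iθ)²: for all t > 0 and all x, y ∈ ℝ, the t-derivative of t ↦ κ(t, x, y) equals (1/R²) · ( (∂²/∂x²)κ(t, x, y) + 2·i·θ·(∂/∂x)κ(t, x, y) − θ²·κ(t, x, y) ), where ∂/∂x denotes differentiation in the second argument. -/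
open Real

private lemma expDeriv1 (C c1 c2 w z : ℂ) :
    HasDerivAt (fun z : ℂ => C * Complex.exp (c1 * (z - w) ^ 2 + c2 * (z - w)))
      ((C * Complex.exp (c1 * (z - w) ^ 2 + c2 * (z - w))) * (c1 * (2 * (z - w)) + c2)) z := by
  have h1 : HasDerivAt (fun z : ℂ => (z - w) ^ 2) (2 * (z - w)) z := by
    simpa using ((hasDerivAt_id z).sub_const w).fun_pow 2
  have hg : HasDerivAt (fun z : ℂ => c1 * (z - w) ^ 2 + c2 * (z - w))
      (c1 * (2 * (z - w)) + c2) z := by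
    simpa using (h1.const_mul c1).fun_add (((hasDerivAt_id z).sub_const w).const_mul c2)
  simpa [mul_assoc] using hg.cexp.const_mul C

private lemma expDeriv2 (C c1 c2 w z : ℂ) :
    HasDerivAt (fun z : ℂ =>
        (C * Complex.exp (c1 * (z - w) ^ 2 + c2 * (z - w))) * (c1 * (2 * (z - w)) + c2))
      ((C * Complex.exp (c1 * (z - w) ^ 2 + c2 * (z - w))) *
        ((c1 * (2 * (z - w)) + c2) ^ 2 + 2 * c1)) z := by
  have hL : HasDerivAt (fun z : ℂ => c1 * (2 * (z - w)) + c2) (c1 * 2) z := by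
    simpa using ((((hasDerivAt_id z).sub_const w).const_mul 2).const_mul c1).add_const c2
  have := (expDeriv1 C c1 c2 w z).mul hL
  refine this.congr_deriv ?_
  ring

theorem stmt_13 (R θ : ℝ) (hR : 0 < R)
    (κ : ℝ → ℝ → ℝ → ℂ)
    (hκ : ∀ t x y : ℝ, 0 < t → κ t x y =
      ((R / (2 * Real.sqrt (π * t)) : ℝ) : ℂ) *
        Complex.exp (((-(R ^ 2 * (x - y) ^ 2) / (4 * t) : ℝ) : ℂ)
          - Complex.I * (θ : ℂ) * ((x : ℂ) - (y : ℂ)))) :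
    ∀ t x y : ℝ, 0 < t →
      deriv (fun t' : ℝ => κ t' x y) t =
        ((1 / R ^ 2 : ℝ) : ℂ) *
          (deriv (fun x' : ℝ => deriv (fun x'' : ℝ => κ t x'' y) x') x
            + 2 * Complex.I * (θ : ℂ) * deriv (fun x' : ℝ => κ t x' y) x
            - (θ : ℂ) ^ 2 * κ t x y) := by
  intro t x y ht
  have htne : (t : ℂ) ≠ 0 := Complex.ofReal_ne_zero.mpr ht.ne'
  have hRne : (R : ℂ) ≠ 0 := Complex.ofReal_ne_zero.mpr hR.ne'
  set C : ℂ := ((R / (2 * Real.sqrt (π * t)) : ℝ) : ℂ) with hC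
  set c1 : ℂ := -((R : ℂ) ^ 2 / (4 * (t : ℂ))) with hc1
  set c2 : ℂ := -(Complex.I * (θ : ℂ)) with hc2
  -- rewrite κ t · y in the complex-polynomial-exponent form
  have hfx : ∀ x' : ℝ, κ t x' y =
      C * Complex.exp (c1 * ((x' : ℂ) - (y : ℂ)) ^ 2 + c2 * ((x' : ℂ) - (y : ℂ))) := by
    intro x'
    rw [hκ t x' y ht]
    congr 1
    congr 1
    rw [hc1, hc2]
    push_cast
    field_simp
    ring
  -- first x-derivative
  have hx1 : ∀ x' : ℝ, HasDerivAt (fun x'' : ℝ => κ t x'' y)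
      ((C * Complex.exp (c1 * ((x' : ℂ) - (y : ℂ)) ^ 2 + c2 * ((x' : ℂ) - (y : ℂ)))) *
        (c1 * (2 * ((x' : ℂ) - (y : ℂ))) + c2)) x' := by
    intro x'
    have := (expDeriv1 C c1 c2 (y : ℂ) (x' : ℂ)).comp_ofReal
    convert this using 2 with x''
    exact hfx x''
  have hdx1 : deriv (fun x'' : ℝ => κ t x'' y) = fun x' : ℝ =>
      (C * Complex.exp (c1 * ((x' : ℂ) - (y : ℂ)) ^ 2 + c2 * ((x' : ℂ) - (y : ℂ)))) *
        (c1 * (2 * ((x' : ℂ) - (y : ℂ))) + c2) := by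
    funext x'
    exact (hx1 x').deriv
  -- second x-derivative
  have hx2 : deriv (fun x' : ℝ => deriv (fun x'' : ℝ => κ t x'' y) x') x =
      (C * Complex.exp (c1 * ((x : ℂ) - (y : ℂ)) ^ 2 + c2 * ((x : ℂ) - (y : ℂ)))) *
        ((c1 * (2 * ((x : ℂ) - (y : ℂ))) + c2) ^ 2 + 2 * c1) := by
    rw [hdx1]
    exact ((expDeriv2 C c1 c2 (y : ℂ) (x : ℂ)).comp_ofReal).deriv
  -- t-derivative
  set A : ℝ := R ^ 2 * (x - y) ^ 2 with hA
  have hsq : ∀ t' : ℝ, 0 < t' → Real.sqrt (π * t') ≠ 0 := fun t' ht' =>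
    Real.sqrt_ne_zero'.mpr (mul_pos Real.pi_pos ht')
  have hcoef : HasDerivAt (fun t' : ℝ => R / (2 * Real.sqrt (π * t')))
      (-(R / (2 * Real.sqrt (π * t))) / (2 * t)) t := by
    have hs : HasDerivAt (fun t' : ℝ => Real.sqrt (π * t'))
        (π / (2 * Real.sqrt (π * t))) t := by
      have h1 : HasDerivAt (fun t' : ℝ => π * t') π t := by
        simpa using (hasDerivAt_id t).const_mul π
      have := (Real.hasDerivAt_sqrt (mul_pos Real.pi_pos ht).ne').comp t h1
      refine this.congr_deriv ?_
      ring
    have hden : HasDerivAt (fun t' : ℝ => 2 * Real.sqrt (π * t'))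
        (2 * (π / (2 * Real.sqrt (π * t)))) t := hs.const_mul 2
    have := (hasDerivAt_const t R).div hden (by
      simpa using hsq t ht)
    refine this.congr_deriv ?_
    have h2 : Real.sqrt (π * t) ^ 2 = π * t :=
      Real.sq_sqrt (mul_pos Real.pi_pos ht).le
    have h3 := hsq t ht
    set s := Real.sqrt (π * t) with hsdef
    field_simp
    linear_combination R * h2
  have hexpo : HasDerivAt (fun t' : ℝ => -A / (4 * t')) (A / (4 * t ^ 2)) t := by
    have := (hasDerivAt_const t (-A)).div ((hasDerivAt_id t).const_mul 4)
      (by positivity)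
    refine this.congr_deriv ?_
    simp only [id]
    field_simp
    ring
  have hT : HasDerivAt (fun t' : ℝ => κ t' x y)
      (((-(R / (2 * Real.sqrt (π * t))) / (2 * t) : ℝ) : ℂ) *
          Complex.exp (((-A / (4 * t) : ℝ) : ℂ) - Complex.I * (θ : ℂ) * ((x : ℂ) - (y : ℂ)))
        + C * (Complex.exp (((-A / (4 * t) : ℝ) : ℂ)
            - Complex.I * (θ : ℂ) * ((x : ℂ) - (y : ℂ))) * ((A / (4 * t ^ 2) : ℝ) : ℂ))) t := by
    have hE : HasDerivAt (fun t' : ℝ =>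
        Complex.exp (((-A / (4 * t') : ℝ) : ℂ) - Complex.I * (θ : ℂ) * ((x : ℂ) - (y : ℂ))))
        (Complex.exp (((-A / (4 * t) : ℝ) : ℂ) - Complex.I * (θ : ℂ) * ((x : ℂ) - (y : ℂ))) *
          ((A / (4 * t ^ 2) : ℝ) : ℂ)) t :=
      (hexpo.ofReal_comp.sub_const _).cexp
    have hg : HasDerivAt (fun t' : ℝ =>
        ((R / (2 * Real.sqrt (π * t')) : ℝ) : ℂ) *
          Complex.exp (((-A / (4 * t') : ℝ) : ℂ) - Complex.I * (θ : ℂ) * ((x : ℂ) - (y : ℂ)))) _ t :=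
      hcoef.ofReal_comp.mul hE
    have heq : (fun t' : ℝ => κ t' x y) =ᶠ[nhds t] fun t' : ℝ =>
        ((R / (2 * Real.sqrt (π * t')) : ℝ) : ℂ) *
          Complex.exp (((-A / (4 * t') : ℝ) : ℂ) - Complex.I * (θ : ℂ) * ((x : ℂ) - (y : ℂ))) := by
      filter_upwards [eventually_gt_nhds ht] with t' ht'
      rw [hκ t' x y ht', hA]
    exact hg.congr_of_eventuallyEq heq
  rw [hT.deriv, hx2, (hx1 x).deriv, hfx x]
  have hEeq : Complex.exp (((-(R ^ 2 * (x - y) ^ 2) / (4 * t) : ℝ) : ℂ)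
        - Complex.I * (θ : ℂ) * ((x : ℂ) - (y : ℂ)))
      = Complex.exp (c1 * ((x : ℂ) - (y : ℂ)) ^ 2 + c2 * ((x : ℂ) - (y : ℂ))) := by
    congr 1
    rw [hc1, hc2]
    push_cast
    field_simp
    ring
  have hcoefC : ((-(R / (2 * Real.sqrt (π * t))) / (2 * t) : ℝ) : ℂ) = -C / (2 * (t : ℂ)) := by
    rw [hC]; push_cast; ring
  have h2c : 2 * Complex.I * (θ : ℂ) = -(2 * c2) := by rw [hc2]; ring
  have hth : ((θ : ℂ)) ^ 2 = -(c2 ^ 2) := by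
    rw [hc2]
    have : Complex.I ^ 2 = -1 := Complex.I_sq
    linear_combination (θ : ℂ) ^ 2 * this
  rw [hEeq, hcoefC, h2c, hth, hA]
  set E : ℂ := Complex.exp (c1 * ((x : ℂ) - (y : ℂ)) ^ 2 + c2 * ((x : ℂ) - (y : ℂ))) with hE
  rw [hc1]
  push_cast
  field_simp
  ring
end

section
/- For all t > 0 and all x ∈ ℝ, ∫_ℝ (sinh((i·x + y)/2))² · exp(−y²/t) dy = (√(π·t)/2) · (exp(t/4)·cos(x) − 1), where sinh is the complex hyperbolic sine, the integrand is a complex-valued function of y ∈ ℝ, and the equality holds in ℂ (the right-hand side being real). -/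
open MeasureTheory Real

theorem stmt_14 (t x : ℝ) (ht : 0 < t) :
    ∫ y : ℝ, (Complex.sinh ((Complex.I * (x : ℂ) + (y : ℂ)) / 2)) ^ 2 *
        Complex.exp ((-(y ^ 2) / t : ℝ) : ℂ)
      = ((Real.sqrt (π * t) / 2 : ℝ) : ℂ) *
          ((Real.exp (t / 4) * Real.cos x - 1 : ℝ) : ℂ) := by
  have htne : (t : ℂ) ≠ 0 := by exact_mod_cast ht.ne'
  set b : ℂ := -1 / t with hbdef
  have hb : b.re < 0 := by
    have : b = ((-1/t : ℝ) : ℂ) := by rw [hbdef]; push_cast; ring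
    rw [this, Complex.ofReal_re]
    exact div_neg_of_neg_of_pos (by norm_num) ht
  have key : ∀ y : ℝ, (Complex.sinh ((Complex.I * (x : ℂ) + (y : ℂ)) / 2)) ^ 2 *
        Complex.exp ((-(y ^ 2) / t : ℝ) : ℂ)
      = (1/4) * Complex.exp (b * y ^ 2 + 1 * y + Complex.I * x)
        + (1/4) * Complex.exp (b * y ^ 2 + (-1) * y + (-(Complex.I * x)))
        + (-1/2) * Complex.exp (b * y ^ 2 + 0 * y + 0) := by
    intro y
    simp only [Complex.sinh]
    have e1 : b * y ^ 2 + 1 * y + Complex.I * x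
        = (Complex.I * x + y) / 2 + (Complex.I * x + y) / 2 + (-(y^2)/t : ℝ) := by
      push_cast [hbdef]; field_simp; ring
    have e2 : b * y ^ 2 + (-1) * y + (-(Complex.I * x))
        = (-((Complex.I * x + y) / 2)) + (-((Complex.I * x + y) / 2)) + (-(y^2)/t : ℝ) := by
      push_cast [hbdef]; field_simp; ring
    have e3 : b * y ^ 2 + 0 * y + 0
        = (Complex.I * x + y) / 2 + (-((Complex.I * x + y) / 2)) + (-(y^2)/t : ℝ) := by
      push_cast [hbdef]; field_simp; ring
    rw [e1, e2, e3]
    simp only [Complex.exp_add]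
    ring
  simp_rw [key]
  have i1 := integrable_cexp_quadratic' hb 1 (Complex.I * x)
  have i2 := integrable_cexp_quadratic' hb (-1) (-(Complex.I * x))
  have i3 := integrable_cexp_quadratic' hb 0 0
  have hadd := integral_add ((i1.const_mul (1/4 : ℂ)).add (i2.const_mul (1/4 : ℂ))) (i3.const_mul (-1/2 : ℂ))
  have hadd2 := integral_add (i1.const_mul (1/4 : ℂ)) (i2.const_mul (1/4 : ℂ))
  simp only [Pi.add_apply] at hadd
  rw [hadd, hadd2,
    integral_const_mul, integral_const_mul, integral_const_mul,
    integral_cexp_quadratic hb, integral_cexp_quadratic hb, integral_cexp_quadratic hb]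
  have hpt : (↑π / -b) = ((π * t : ℝ) : ℂ) := by
    rw [hbdef]; push_cast; field_simp
  rw [hpt]
  have hsq : ((π * t : ℝ) : ℂ) ^ (1 / 2 : ℂ) = (Real.sqrt (π * t) : ℂ) := by
    rw [show (1/2 : ℂ) = ((1/2 : ℝ) : ℂ) by norm_num,
      ← Complex.ofReal_cpow (by positivity), Real.sqrt_eq_rpow]
  rw [hsq]
  have h1 : Complex.I * ↑x - 1 ^ 2 / (4 * b) = Complex.I * x + (t/4 : ℝ) := by
    rw [hbdef]; push_cast; field_simp; ring
  have h2 : -(Complex.I * ↑x) - (-1) ^ 2 / (4 * b) = -(Complex.I * x) + (t/4 : ℝ) := by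
    rw [hbdef]; push_cast; field_simp; ring
  rw [h1, h2]
  simp only [Complex.exp_add, zero_sub, zero_pow, neg_zero, Complex.exp_zero]
  rw [show Complex.I * (x:ℂ) = (x:ℂ) * Complex.I by ring, Complex.exp_mul_I,
    show -((x:ℂ) * Complex.I) = (-x:ℂ) * Complex.I by push_cast; ring, Complex.exp_mul_I]
  push_cast [Complex.ofReal_exp, Real.cos_neg, Real.sin_neg]
  ring_nf
  simp [Complex.exp_ofReal_re]
  ring
end

section
/- Let σ > 0 and let x ∈ ℝ with sin(x/2) ≠ 0. The real-variable function s ↦ Γ(s − 1/2) · ( cos(x)·σ^{1/2−s} − (σ + 1/2)^{1/2−s} ) · (Γ(s))⁻¹ / (4·√(2π)·sin(x/2)²) is differentiable at s = 0 with derivative equal to ( √(σ + 1/2) − cos(x)·√σ ) / ( 2·√2·sin(x/2)² ). (This computes −2·log T_g(σ) for the equivariant analytic torsion of 3-dimensional hyperbolic space at a regular elliptic rotation g through angle x; letting σ → 0 yields T_g = exp(−1/(8·sin(x/2)²)).) -/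
open Real

theorem stmt_16 (σ x : ℝ) (hσ : 0 < σ) (hx : Real.sin (x / 2) ≠ 0) :
    HasDerivAt (fun s : ℝ =>
        Real.Gamma (s - 1/2) * (Real.cos x * σ ^ (1/2 - s) - (σ + 1/2) ^ (1/2 - s)) *
          (Real.Gamma s)⁻¹ / (4 * Real.sqrt (2 * π) * Real.sin (x / 2) ^ 2))
      ((Real.sqrt (σ + 1/2) - Real.cos x * Real.sqrt σ) /
        (2 * Real.sqrt 2 * Real.sin (x / 2) ^ 2)) 0 := by
  have hσ' : (0:ℝ) < σ + 1/2 := by linarith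
  set C : ℝ := 4 * Real.sqrt (2 * π) * Real.sin (x / 2) ^ 2 with hC
  set G : ℝ → ℝ := fun s =>
    Real.Gamma (s - 1/2) * (Real.cos x * σ ^ (1/2 - s) - (σ + 1/2) ^ (1/2 - s)) *
      (Real.Gamma (s + 1))⁻¹ with hGdef
  -- differentiability of G at 0
  have hd1 : DifferentiableAt ℝ (fun s : ℝ => Real.Gamma (s - 1/2)) 0 := by
    have h : ∀ m : ℕ, ((0:ℝ) - 1/2) ≠ -m := by
      intro m h
      have : (m:ℝ) = 1/2 := by linarith
      rcases m with _ | m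
      · norm_num at this
      · push_cast at this
        have : (0:ℝ) ≤ (m:ℝ) := Nat.cast_nonneg m
        linarith
    exact (Real.differentiableAt_Gamma h).comp (g := Real.Gamma) (f := fun s : ℝ => s - 1/2) 0 (differentiableAt_id.sub_const _)
  have hd2 : DifferentiableAt ℝ
      (fun s : ℝ => Real.cos x * σ ^ (1/2 - s) - (σ + 1/2) ^ (1/2 - s)) 0 := by
    have h1 : DifferentiableAt ℝ (fun s : ℝ => σ ^ (1/2 - s)) 0 := by
      have := ((hasDerivAt_id (0:ℝ)).const_sub (1/2)).hasFDerivAt.const_rpow hσ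
      exact this.differentiableAt
    have h2 : DifferentiableAt ℝ (fun s : ℝ => (σ + 1/2) ^ (1/2 - s)) 0 := by
      have := ((hasDerivAt_id (0:ℝ)).const_sub (1/2)).hasFDerivAt.const_rpow hσ'
      exact this.differentiableAt
    exact (h1.const_mul _).sub h2
  have hd3 : DifferentiableAt ℝ (fun s : ℝ => (Real.Gamma (s + 1))⁻¹) 0 := by
    have h : ∀ m : ℕ, ((0:ℝ) + 1) ≠ -m := by
      intro m h
      have : (0:ℝ) ≤ (m:ℝ) := Nat.cast_nonneg m
      linarith
    have hg : DifferentiableAt ℝ (fun s : ℝ => Real.Gamma (s + 1)) 0 :=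
      (Real.differentiableAt_Gamma h).comp (g := Real.Gamma) (f := fun s : ℝ => s + 1) 0 (differentiableAt_id.add_const _)
    refine hg.inv ?_
    simp [Real.Gamma_one]
  have hG : DifferentiableAt ℝ G 0 := (hd1.mul hd2).mul hd3
  have hF : HasDerivAt (fun s : ℝ => G s * s / C) ((deriv G 0 * 0 + G 0 * 1) / C) 0 :=
    (hG.hasDerivAt.mul (hasDerivAt_id 0)).div_const C
  have heq : (fun s : ℝ =>
      Real.Gamma (s - 1/2) * (Real.cos x * σ ^ (1/2 - s) - (σ + 1/2) ^ (1/2 - s)) *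
        (Real.Gamma s)⁻¹ / C) = fun s : ℝ => G s * s / C := by
    funext s
    rcases eq_or_ne s 0 with rfl | hs
    · simp [Real.Gamma_zero, hGdef]
    · have h : (Real.Gamma s)⁻¹ = s * (Real.Gamma (s + 1))⁻¹ := by
        rw [Real.Gamma_add_one hs, mul_inv, ← mul_assoc, mul_inv_cancel₀ hs, one_mul]
      simp only [hGdef, h]
      ring
  rw [heq]
  convert hF using 1
  have hΓ : Real.Gamma (0 - 1/2 : ℝ) = -2 * Real.sqrt π := by
    have h := Real.Gamma_add_one (s := (0 - 1/2 : ℝ)) (by norm_num)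
    rw [show (0 - 1/2 : ℝ) + 1 = 1/2 by norm_num, Real.Gamma_one_half_eq] at h
    linarith
  have hsqrt2π : Real.sqrt (2 * π) = Real.sqrt 2 * Real.sqrt π :=
    Real.sqrt_mul (by norm_num) π
  have hπ : (0:ℝ) < Real.sqrt π := Real.sqrt_pos.2 Real.pi_pos
  have h2 : (0:ℝ) < Real.sqrt 2 := by positivity
  have hs2 : Real.sin (x / 2) ^ 2 ≠ 0 := pow_ne_zero _ hx
  simp only [hGdef, hC, mul_zero, zero_add, mul_one, hΓ, hsqrt2π,
    show (1/2 - 0 : ℝ) = 1/2 by norm_num, show (0 + 1 : ℝ) = 1 by norm_num,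
    Real.Gamma_one, inv_one, ← Real.sqrt_eq_rpow]
  field_simp
  ring
end
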